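/- arXiv:1007.2029 — 11 statements merged into one kernel-verified Lean document; each statement's English description precedes it below -/
import Mathlib

section
/- Let t ≥ 0 and n ≥ 1, and define the family F* = (A_1*, ..., A_n*) where A_i* = {i} ∪ {n+1, ..., n+t} for 1 ≤ i ≤ n. Then the number of SDRs of F* equals ∑_{j=0}^{t} C(t,j) · C(n,j) · j!. -/
open Finset

/-- Number of SDRs of the family `A`. -/
def numSDR {n : ℕ} (A : Fin n → Finset ℕ) : ℕ :=
  ((Fintype.piFinset A).filter Function.Injective).card

/-- `(t,n)`-family: every nonempty union of `k` sets has at least `k + t` elements. -/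
def IsTNFamily (t : ℕ) {n : ℕ} (A : Fin n → Finset ℕ) : Prop :=
  ∀ I : Finset (Fin n), I.Nonempty → I.card + t ≤ (I.biUnion A).card

/-- Valued `(t,n)`-family with valuation `a`. -/
def IsValuedTN (t : ℕ) {n : ℕ} (a : Fin n → ℕ) (A : Fin n → Finset ℕ) : Prop :=
  (∀ i, 0 < a i) ∧ (∀ i, (A i).card = a i + t) ∧
    ∀ I : Finset (Fin n), 2 ≤ I.card → (∑ i ∈ I, a i) + t ≤ (I.biUnion A).card

/-- `I_x = {i : x ∈ A_i}`. -/
def Ix {n : ℕ} (A : Fin n → Finset ℕ) (x : ℕ) : Finset (Fin n) :=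
  Finset.univ.filter fun i => x ∈ A i

/-- `{x,y}` is exclusive. -/
def Exclusive {n : ℕ} (A : Fin n → Finset ℕ) (x y : ℕ) : Prop :=
  (Ix A x \ Ix A y).Nonempty ∧ (Ix A y \ Ix A x).Nonempty

/-- `{x,y}` is saturated. -/
def Saturated (t : ℕ) {n : ℕ} (a : Fin n → ℕ) (A : Fin n → Finset ℕ) (x y : ℕ) : Prop :=
  ∃ I : Finset (Fin n),
    I ∩ Ix A x ∩ Ix A y = ∅ ∧ (I ∩ (Ix A x \ Ix A y)).Nonempty ∧
    (I ∩ (Ix A y \ Ix A x)).Nonempty ∧ (I.biUnion A).card = (∑ i ∈ I, a i) + t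

/-- The modified family `F_y^x`: replace `x` by `y` in each `A_i` with `i ∈ I_x ∩ I_y^c`. -/
def swapFam {n : ℕ} (A : Fin n → Finset ℕ) (x y : ℕ) : Fin n → Finset ℕ :=
  fun i => if x ∈ A i ∧ y ∉ A i then insert y (A i \ {x}) else A i

def U (t n : ℕ) : ℕ := ∑ j ∈ Finset.range (t + 1), t.choose j * n.choose j * j.factorial

/-- The extremal family `F*`: `A_i* = {i} ∪ {n+1, …, n+t}` (index `i : Fin n` stands for `i+1`). -/
def Astar (t n : ℕ) : Fin n → Finset ℕ := fun i => insert ((i : ℕ) + 1) (Finset.Ioc n (n + t))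

/-- `∑_{i < j} a_i a_j`. -/
def pairSum {n : ℕ} (a : Fin n → ℕ) : ℕ :=
  ∑ p ∈ Finset.univ.filter (fun p : Fin n × Fin n => p.1 < p.2), a p.1 * a p.2

/-- Elementary symmetric polynomial `e_k(a_1,…,a_n)`. -/
def esymm {n : ℕ} (a : Fin n → ℕ) (k : ℕ) : ℕ :=
  ∑ S ∈ Finset.univ.powersetCard k, ∏ i ∈ S, a i
theorem numSDR_Astar (t n : ℕ) (hn : 1 ≤ n) :
    numSDR (Astar t n) = U t n := by
  classical
  set T : Finset ℕ := Finset.Ioc n (n + t) with hT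
  have hTcard : T.card = t := by simp [hT]
  have hAi : ∀ i : Fin n, Astar t n i = insert ((i : ℕ) + 1) T := fun i => rfl
  have hle : ∀ i : Fin n, (i : ℕ) + 1 ≤ n := fun i => i.isLt
  have hnotT : ∀ i : Fin n, ((i : ℕ) + 1) ∉ T := by
    intro i hi
    rw [hT, Finset.mem_Ioc] at hi
    exact absurd hi.1 (not_lt.2 (hle i))
  have key : numSDR (Astar t n)
      = ∑ S ∈ (univ : Finset (Fin n)).powerset, t.descFactorial S.card := by
    unfold numSDR
    rw [Finset.card_eq_sum_card_fiberwise
      (f := fun x : Fin n → ℕ => univ.filter (fun i => x i ∈ T))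
      (t := (univ : Finset (Fin n)).powerset) (fun x _ => by simp)]
    refine Finset.sum_congr rfl ?_
    intro S hS
    have hemb : t.descFactorial S.card = (univ : Finset (↥S ↪ ↥T)).card := by
      rw [Finset.card_univ, Fintype.card_embedding_eq, Fintype.card_coe, Fintype.card_coe, hTcard]
    rw [hemb]
    have hinS : ∀ x : Fin n → ℕ, (univ.filter (fun i => x i ∈ T) = S) →
        ∀ i : Fin n, (i ∈ S ↔ x i ∈ T) := by
      intro x h i
      rw [← h]; simp
    refine Finset.card_bij'
      (fun x hx =>
        ⟨fun i => ⟨x i, (hinS x (Finset.mem_filter.1 hx).2 i).1 i.2⟩,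
          fun a b hab => Subtype.ext ((Finset.mem_filter.1 (Finset.mem_filter.1 hx).1).2
            (Subtype.ext_iff.1 hab))⟩)
      (fun e _ => fun i => if h : i ∈ S then ((e ⟨i, h⟩ : ℕ)) else (i : ℕ) + 1)
      (fun a ha => Finset.mem_univ _) ?_ ?_ ?_
    · -- backward lands in fiber
      intro e _
      set x : Fin n → ℕ := fun i => if h : i ∈ S then ((e ⟨i, h⟩ : ℕ)) else (i : ℕ) + 1 with hx
      have hxT : ∀ i : Fin n, i ∈ S → x i ∈ T := by
        intro i h; simp only [hx, dif_pos h]; exact (e ⟨i, h⟩).2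
      have hxn : ∀ i : Fin n, i ∉ S → x i = (i : ℕ) + 1 := by
        intro i h; simp only [hx, dif_neg h]
      have hgt : ∀ i : Fin n, i ∈ S → n < x i := by
        intro i h; have := hxT i h; rw [hT, Finset.mem_Ioc] at this; exact this.1
      refine Finset.mem_filter.2 ⟨Finset.mem_filter.2 ⟨Fintype.mem_piFinset.2 ?_, ?_⟩, ?_⟩
      · intro i
        rw [hAi]
        by_cases h : i ∈ S
        · exact Finset.mem_insert_of_mem (hxT i h)
        · rw [hxn i h]; exact Finset.mem_insert_self _ _
      · intro i j hij
        by_cases hi : i ∈ S <;> by_cases hj : j ∈ S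
        · have heq : (⟨i, hi⟩ : ↥S) = ⟨j, hj⟩ := e.injective
            (Subtype.ext (by simpa [hx, dif_pos hi, dif_pos hj] using hij))
          exact Subtype.ext_iff.1 heq
        · exfalso
          have h1 := hgt i hi
          rw [hij, hxn j hj] at h1
          have := j.isLt
          omega
        · exfalso
          have h1 := hgt j hj
          rw [← hij, hxn i hi] at h1
          have := i.isLt
          omega
        · refine Fin.ext ?_
          have h1 := hxn i hi
          have h2 := hxn j hj
          omega
      · ext i
        simp only [Finset.mem_filter, Finset.mem_univ, true_and]
        constructor
        · intro hiT
          by_contra h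
          rw [hxn i h] at hiT
          exact hnotT i hiT
        · exact hxT i
    · -- left inverse
      intro x hx
      have hfil := (Finset.mem_filter.1 hx).2
      have hmem := Fintype.mem_piFinset.1 (Finset.mem_filter.1 (Finset.mem_filter.1 hx).1).1
      funext i
      by_cases h : i ∈ S
      · simp [dif_pos h]; rfl
      · simp only [dif_neg h]
        have hx1 : x i ∉ T := fun hc => h ((hinS x hfil i).2 hc)
        have := hmem i
        rw [hAi, Finset.mem_insert] at this
        rcases this with h1 | h1
        · exact h1.symm
        · exact absurd h1 hx1
    · -- right inverse
      intro e he
      ext i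
      simp [dif_pos i.2]
  rw [key, Finset.sum_powerset]
  have hcu : (univ : Finset (Fin n)).card = n := by simp
  rw [hcu]
  have step : ∀ j ∈ Finset.range (n + 1),
      (∑ S ∈ (univ : Finset (Fin n)).powersetCard j, t.descFactorial S.card)
        = n.choose j * t.descFactorial j := by
    intro j _
    rw [Finset.sum_congr rfl (fun S hS => by
      rw [(Finset.mem_powersetCard.1 hS).2]), Finset.sum_const, Finset.card_powersetCard, hcu,
      smul_eq_mul]
  rw [Finset.sum_congr rfl step]
  have hform : ∀ j, n.choose j * t.descFactorial j = t.choose j * n.choose j * j.factorial := by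
    intro j
    rw [Nat.descFactorial_eq_factorial_mul_choose]
    ring
  unfold U
  have h1 : ∑ j ∈ Finset.range (n + 1), n.choose j * t.descFactorial j
      = ∑ j ∈ Finset.range (max n t + 1), n.choose j * t.descFactorial j := by
    refine Finset.sum_subset (Finset.range_subset_range.2 (Nat.succ_le_succ (le_max_left n t))) ?_
    intro j _ hj
    rw [Finset.mem_range, not_lt] at hj
    rw [Nat.choose_eq_zero_of_lt hj, Nat.zero_mul]
  have h2 : ∑ j ∈ Finset.range (t + 1), t.choose j * n.choose j * j.factorial
      = ∑ j ∈ Finset.range (max n t + 1), t.choose j * n.choose j * j.factorial := by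
    refine Finset.sum_subset (Finset.range_subset_range.2 (Nat.succ_le_succ (le_max_right n t))) ?_
    intro j _ hj
    rw [Finset.mem_range, not_lt] at hj
    rw [Nat.choose_eq_zero_of_lt hj, Nat.zero_mul, Nat.zero_mul]
  rw [h1, h2]
  exact Finset.sum_congr rfl fun j _ => hform j
end

section
/- Every (1,n)-family has at least n+1 SDRs, and this bound is attained, i.e., M(1,n) = n + 1. -/
open Finset

variable {n : ℕ}

/-- SDRs of `A` on index set `I`, padded with `0` outside `I`. -/
def sdrOn (A : Fin n → Finset ℕ) (I : Finset (Fin n)) : Finset (Fin n → ℕ) :=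
  (Fintype.piFinset (fun i => if i ∈ I then A i else {0})).filter (fun f => Set.InjOn f I)

lemma mem_sdrOn {A : Fin n → Finset ℕ} {I : Finset (Fin n)} {f : Fin n → ℕ} :
    f ∈ sdrOn A I ↔ ((∀ i ∈ I, f i ∈ A i) ∧ (∀ i ∉ I, f i = 0)) ∧ Set.InjOn f I := by
  simp only [sdrOn, Finset.mem_filter, Fintype.mem_piFinset]
  constructor
  · rintro ⟨h1, h2⟩
    refine ⟨⟨fun i hi => ?_, fun i hi => ?_⟩, h2⟩
    · have := h1 i; rwa [if_pos hi] at this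
    · have := h1 i; rwa [if_neg hi, Finset.mem_singleton] at this
  · rintro ⟨⟨h1, h2⟩, h3⟩
    refine ⟨fun i => ?_, h3⟩
    by_cases hi : i ∈ I
    · rw [if_pos hi]; exact h1 i hi
    · rw [if_neg hi, Finset.mem_singleton]; exact h2 i hi

lemma sdrOn_mono {A B : Fin n → Finset ℕ} {I : Finset (Fin n)} (h : ∀ i, B i ⊆ A i) :
    sdrOn B I ⊆ sdrOn A I := by
  intro f hf
  rw [mem_sdrOn] at hf ⊢
  exact ⟨⟨fun i hi => h i (hf.1.1 i hi), hf.1.2⟩, hf.2⟩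

/-- Hall: surplus-0 condition on `I` gives an SDR on `I`. -/
lemma sdrOn_nonempty {A : Fin n → Finset ℕ} {I : Finset (Fin n)}
    (h : ∀ J ⊆ I, J.card ≤ (J.biUnion A).card) : (sdrOn A I).Nonempty := by
  have key : ∀ s : Finset {x // x ∈ I}, s.card ≤ (s.biUnion (fun i => A i.1)).card := by
    intro s
    have hJ : s.map (Function.Embedding.subtype _) ⊆ I := by
      intro x hx
      simp only [Finset.mem_map, Function.Embedding.coe_subtype] at hx
      obtain ⟨y, _, rfl⟩ := hx
      exact y.2
    have hcard : (s.map (Function.Embedding.subtype _)).card = s.card := Finset.card_map _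
    have hbu : (s.map (Function.Embedding.subtype _)).biUnion A = s.biUnion (fun i => A i.1) := by
      ext x
      simp [Finset.mem_biUnion, Finset.mem_map, Function.Embedding.coe_subtype]
    calc s.card = (s.map (Function.Embedding.subtype _)).card := hcard.symm
    _ ≤ ((s.map (Function.Embedding.subtype _)).biUnion A).card := h _ hJ
    _ = _ := by rw [hbu]
  obtain ⟨f, hfinj, hfmem⟩ := (Finset.all_card_le_biUnion_card_iff_exists_injective _).1 key
  classical
  refine ⟨fun i => if hi : i ∈ I then f ⟨i, hi⟩ else 0, ?_⟩
  rw [mem_sdrOn]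
  refine ⟨⟨fun i hi => ?_, fun i hi => ?_⟩, ?_⟩
  · rw [dif_pos hi]; exact hfmem ⟨i, hi⟩
  · rw [dif_neg hi]
  · intro i hi j hj hij
    simp only [Finset.mem_coe] at hi hj
    simp only [dif_pos hi, dif_pos hj] at hij
    have := hfinj hij
    exact congrArg Subtype.val this

section master
variable (A : Fin n → Finset ℕ) (I I₀ : Finset (Fin n))

/-- restriction to `I₀`, zero elsewhere -/
def restr (I₀ : Finset (Fin n)) (g : Fin n → ℕ) : Fin n → ℕ := fun i => if i ∈ I₀ then g i else 0

def merge (I₀ : Finset (Fin n)) (f h : Fin n → ℕ) : Fin n → ℕ :=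
  fun i => if i ∈ I₀ then f i else h i

def delFam (A : Fin n → Finset ℕ) (I₀ : Finset (Fin n)) (f : Fin n → ℕ) : Fin n → Finset ℕ :=
  fun j => A j \ I₀.image f

lemma restr_mem {A : Fin n → Finset ℕ} {I I₀ : Finset (Fin n)} (hsub : I₀ ⊆ I)
    {g : Fin n → ℕ} (hg : g ∈ sdrOn A I) : restr I₀ g ∈ sdrOn A I₀ := by
  rw [mem_sdrOn] at hg ⊢
  refine ⟨⟨fun i hi => ?_, fun i hi => ?_⟩, ?_⟩
  · rw [restr, if_pos hi]; exact hg.1.1 i (hsub hi)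
  · rw [restr, if_neg hi]
  · intro i hi j hj hij
    simp only [Finset.mem_coe] at hi hj
    simp only [restr, hi, hj, if_true] at hij
    exact hg.2 (Finset.mem_coe.2 (hsub hi)) (Finset.mem_coe.2 (hsub hj)) hij

lemma merge_mem {A : Fin n → Finset ℕ} {I I₀ : Finset (Fin n)} (hsub : I₀ ⊆ I)
    {f h : Fin n → ℕ} (hf : f ∈ sdrOn A I₀) (hh : h ∈ sdrOn (delFam A I₀ f) (I \ I₀)) :
    merge I₀ f h ∈ sdrOn A I := by
  rw [mem_sdrOn] at hf hh ⊢
  refine ⟨⟨fun i hi => ?_, fun i hi => ?_⟩, ?_⟩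
  · by_cases hi0 : i ∈ I₀
    · rw [merge, if_pos hi0]; exact hf.1.1 i hi0
    · rw [merge, if_neg hi0]
      have : i ∈ I \ I₀ := Finset.mem_sdiff.2 ⟨hi, hi0⟩
      exact (Finset.mem_sdiff.1 (hh.1.1 i this)).1
  · have hi0 : i ∉ I₀ := fun h' => hi (hsub h')
    rw [merge, if_neg hi0]
    exact hh.1.2 i (fun h' => hi (Finset.mem_sdiff.1 h').1)
  · intro i hi j hj hij
    simp only [Finset.mem_coe] at hi hj
    by_cases hi0 : i ∈ I₀ <;> by_cases hj0 : j ∈ I₀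
    · simp only [merge, hi0, hj0, if_true] at hij
      exact hf.2 hi0 hj0 hij
    · exfalso
      simp only [merge, hi0, hj0, if_true, if_false] at hij
      have hjI : j ∈ I \ I₀ := Finset.mem_sdiff.2 ⟨hj, hj0⟩
      have := hh.1.1 j hjI
      rw [delFam, Finset.mem_sdiff] at this
      exact this.2 (Finset.mem_image.2 ⟨i, hi0, hij⟩)
    · exfalso
      simp only [merge, hi0, hj0, if_true, if_false] at hij
      have hiI : i ∈ I \ I₀ := Finset.mem_sdiff.2 ⟨hi, hi0⟩
      have := hh.1.1 i hiI
      rw [delFam, Finset.mem_sdiff] at this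
      exact this.2 (Finset.mem_image.2 ⟨j, hj0, hij.symm⟩)
    · simp only [merge, hi0, hj0, if_false] at hij
      exact hh.2 (Finset.mem_coe.2 (Finset.mem_sdiff.2 ⟨hi, hi0⟩))
        (Finset.mem_coe.2 (Finset.mem_sdiff.2 ⟨hj, hj0⟩)) hij

lemma restr_merge {I₀ : Finset (Fin n)} {f h : Fin n → ℕ} (hf0 : ∀ i ∉ I₀, f i = 0) :
    restr I₀ (merge I₀ f h) = f := by
  funext i
  by_cases hi : i ∈ I₀
  · simp [restr, merge, hi]
  · simp [restr, merge, hi, (hf0 i hi).symm]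

/-- Master counting inequality. -/
lemma master {A : Fin n → Finset ℕ} {I I₀ : Finset (Fin n)} (hsub : I₀ ⊆ I)
    {f₀ : Fin n → ℕ} (hf₀ : f₀ ∈ sdrOn A I₀)
    (hext : ∀ f ∈ sdrOn A I₀, (sdrOn (delFam A I₀ f) (I \ I₀)).Nonempty) :
    (sdrOn A I₀).card + (sdrOn (delFam A I₀ f₀) (I \ I₀)).card ≤ (sdrOn A I).card + 1 := by
  classical
  set S := sdrOn A I
  set T₁ := S.filter (fun g => restr I₀ g ≠ f₀)
  set T₂ := S.filter (fun g => restr I₀ g = f₀)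
  have hcard : T₂.card + T₁.card = S.card := by
    simpa using Finset.card_filter_add_card_filter_not (s := S)
      (fun g => restr I₀ g = f₀)
  have h1 : (sdrOn A I₀).card ≤ T₁.card + 1 := by
    have hsubset : (sdrOn A I₀) \ {f₀} ⊆ T₁.image (restr I₀) := by
      intro f hf
      rw [Finset.mem_sdiff, Finset.mem_singleton] at hf
      obtain ⟨hfm, hfne⟩ := hf
      obtain ⟨h, hh⟩ := hext f hfm
      have hmm := merge_mem hsub hfm hh
      have hr : restr I₀ (merge I₀ f h) = f :=
        restr_merge (mem_sdrOn.1 hfm).1.2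
      refine Finset.mem_image.2 ⟨merge I₀ f h, ?_, hr⟩
      exact Finset.mem_filter.2 ⟨hmm, by rw [hr]; exact hfne⟩
    calc (sdrOn A I₀).card ≤ ((sdrOn A I₀) \ {f₀}).card + 1 := by
          have := Finset.card_le_card_sdiff_add_card (s := sdrOn A I₀) (t := {f₀})
          simpa using this
      _ ≤ (T₁.image (restr I₀)).card + 1 := by
          exact Nat.add_le_add_right (Finset.card_le_card hsubset) 1
      _ ≤ T₁.card + 1 := Nat.add_le_add_right (Finset.card_image_le) 1
  have h2 : (sdrOn (delFam A I₀ f₀) (I \ I₀)).card ≤ T₂.card := by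
    apply Finset.card_le_card_of_injOn (merge I₀ f₀)
    · intro h hh
      refine Finset.mem_filter.2 ⟨merge_mem hsub hf₀ hh, ?_⟩
      exact restr_merge (mem_sdrOn.1 hf₀).1.2
    · intro h1' hh1 h2' hh2 heq
      funext i
      by_cases hi : i ∈ I₀
      · have e1 : h1' i = 0 := (mem_sdrOn.1 (Finset.mem_coe.1 hh1)).1.2 i
          (fun hmem => (Finset.mem_sdiff.1 hmem).2 hi)
        have e2 : h2' i = 0 := (mem_sdrOn.1 (Finset.mem_coe.1 hh2)).1.2 i
          (fun hmem => (Finset.mem_sdiff.1 hmem).2 hi)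
        rw [e1, e2]
      · have := congrFun heq i
        simpa [merge, hi] using this
  omega

end master

lemma biUnion_del (A : Fin n → Finset ℕ) (s : Finset ℕ) (J : Finset (Fin n)) :
    J.biUnion (fun j => A j \ s) = J.biUnion A \ s := by
  ext x
  simp only [Finset.mem_biUnion, Finset.mem_sdiff]
  tauto

lemma card_sdrOn_singleton (A : Fin n → Finset ℕ) (i₀ : Fin n) :
    (sdrOn A {i₀}).card = (A i₀).card := by
  classical
  refine Finset.card_bij' (fun f _ => f i₀) (fun x _ => fun i => if i = i₀ then x else 0)
    ?_ ?_ ?_ ?_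
  · intro f hf
    exact (mem_sdrOn.1 hf).1.1 i₀ (Finset.mem_singleton_self i₀)
  · intro x hx
    rw [mem_sdrOn]
    refine ⟨⟨fun i hi => ?_, fun i hi => ?_⟩, ?_⟩
    · rw [Finset.mem_singleton] at hi; subst hi; simpa using hx
    · simp only [Finset.mem_singleton] at hi; simp [hi]
    · intro i hi j hj _
      simp only [Finset.coe_singleton, Set.mem_singleton_iff] at hi hj
      rw [hi, hj]
  · intro f hf
    funext i
    by_cases hi : i = i₀
    · subst hi; simp
    · simp only [hi, if_false]
      exact ((mem_sdrOn.1 hf).1.2 i (by simp [hi])).symm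
  · intro x hx
    simp

lemma lower_aux : ∀ k : ℕ, ∀ {n : ℕ} (A : Fin n → Finset ℕ) (I : Finset (Fin n)),
    I.card ≤ k → (∀ J ⊆ I, J.Nonempty → J.card + 1 ≤ (J.biUnion A).card) →
    I.card + 1 ≤ (sdrOn A I).card := by
  intro k
  induction k with
  | zero =>
    intro n A I hI _
    have hIe : I = ∅ := Finset.card_eq_zero.1 (Nat.le_zero.1 hI)
    subst hIe
    have hmem : (fun _ : Fin n => 0) ∈ sdrOn A ∅ := by
      rw [mem_sdrOn]; simp
    simpa using Finset.card_pos.2 ⟨_, hmem⟩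
  | succ k ih =>
    intro n A I hI hA
    by_cases hIk : I.card ≤ k
    · exact ih A I hIk hA
    have hIcard : I.card = k + 1 := by omega
    have hIne : I.Nonempty := Finset.card_pos.1 (by omega)
    have surplus0 : ∀ J ⊆ I, J.card ≤ (J.biUnion A).card := by
      intro J hJ
      rcases J.eq_empty_or_nonempty with rfl | hJne
      · simp
      · have := hA J hJ hJne; omega
    by_cases hcrit : ∃ J, J ⊆ I ∧ J.Nonempty ∧ J ≠ I ∧ (J.biUnion A).card ≤ J.card + 1
    · -- Case 2: a critical proper nonempty subset exists; take one of maximal cardinality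
      classical
      set s := I.powerset.filter
        (fun J => J.Nonempty ∧ J ≠ I ∧ (J.biUnion A).card ≤ J.card + 1) with hs
      have hsne : s.Nonempty := by
        obtain ⟨J, h1, h2, h3, h4⟩ := hcrit
        exact ⟨J, by simp [hs, Finset.mem_powerset, h1, h2, h3, h4]⟩
      obtain ⟨I₀, hI₀s, hmax⟩ := Finset.exists_max_image s Finset.card hsne
      have hI₀un := Finset.mem_filter.1 hI₀s
      have hI₀sub : I₀ ⊆ I := Finset.mem_powerset.1 hI₀un.1
      obtain ⟨hI₀ne, hI₀neq, hI₀crit⟩ := hI₀un.2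
      set U₀ := I₀.biUnion A with hU₀def
      have hU₀ : U₀.card = I₀.card + 1 :=
        le_antisymm hI₀crit (hA I₀ hI₀sub hI₀ne)
      have hmax' : ∀ J ⊆ I, J ≠ I → I₀.card < J.card → J.card + 2 ≤ (J.biUnion A).card := by
        intro J hJ hJne hcard
        by_contra hlt
        push_neg at hlt
        have hJnonempty : J.Nonempty := Finset.card_pos.1 (by have := hI₀ne.card_pos; omega)
        have hJs : J ∈ s := by
          simp only [hs, Finset.mem_filter, Finset.mem_powerset]
          exact ⟨hJ, hJnonempty, hJne, by omega⟩
        exact absurd (hmax J hJs) (not_le.2 hcard)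
      have himg : ∀ f ∈ sdrOn A I₀, I₀.image f ⊆ U₀ := by
        intro f hf x hx
        obtain ⟨i, hi, rfl⟩ := Finset.mem_image.1 hx
        exact Finset.mem_biUnion.2 ⟨i, hi, (mem_sdrOn.1 hf).1.1 i hi⟩
      have hcover : ∀ f ∈ sdrOn A I₀, ∀ J : Finset (Fin n),
          (J.biUnion A) \ U₀ ⊆ J.biUnion (delFam A I₀ f) := by
        intro f hf J
        rw [show J.biUnion (delFam A I₀ f) = J.biUnion A \ I₀.image f from biUnion_del A _ J]
        exact Finset.sdiff_subset_sdiff Finset.Subset.rfl (himg f hf)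
      have hdisj : ∀ J ⊆ I \ I₀, Disjoint I₀ J := fun J hJ =>
        Finset.disjoint_left.2 fun a ha haJ => (Finset.mem_sdiff.1 (hJ haJ)).2 ha
      have hbase : ∀ J ⊆ I \ I₀,
          ((I₀ ∪ J).biUnion A).card ≤ ((J.biUnion A) \ U₀).card + (I₀.card + 1) := by
        intro J hJ
        have h1 : (I₀ ∪ J).biUnion A ⊆ ((J.biUnion A) \ U₀) ∪ U₀ := by
          intro x hx
          rcases Finset.mem_biUnion.1 hx with ⟨i, hi, hxi⟩
          by_cases hxU : x ∈ U₀
          · exact Finset.mem_union_right _ hxU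
          · rcases Finset.mem_union.1 hi with hi0 | hiJ
            · exact absurd (Finset.mem_biUnion.2 ⟨i, hi0, hxi⟩) hxU
            · exact Finset.mem_union_left _
                (Finset.mem_sdiff.2 ⟨Finset.mem_biUnion.2 ⟨i, hiJ, hxi⟩, hxU⟩)
        calc ((I₀ ∪ J).biUnion A).card ≤ (((J.biUnion A) \ U₀) ∪ U₀).card :=
              Finset.card_le_card h1
          _ ≤ ((J.biUnion A) \ U₀).card + U₀.card := Finset.card_union_le _ _
          _ = _ := by rw [hU₀]
      have hunsub : ∀ J ⊆ I \ I₀, I₀ ∪ J ⊆ I :=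
        fun J hJ => Finset.union_subset hI₀sub (hJ.trans (Finset.sdiff_subset))
      have huncard : ∀ J ⊆ I \ I₀, (I₀ ∪ J).card = I₀.card + J.card :=
        fun J hJ => Finset.card_union_of_disjoint (hdisj J hJ)
      -- extension property (surplus-0) for all f
      have hext : ∀ f ∈ sdrOn A I₀, (sdrOn (delFam A I₀ f) (I \ I₀)).Nonempty := by
        intro f hf
        apply sdrOn_nonempty
        intro J hJ
        rcases J.eq_empty_or_nonempty with rfl | hJne
        · simp
        · have h1 : (I₀ ∪ J).card + 1 ≤ ((I₀ ∪ J).biUnion A).card :=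
            hA _ (hunsub J hJ) (hI₀ne.mono Finset.subset_union_left)
          have h2 := hbase J hJ
          have h3 := huncard J hJ
          have h4 : J.card ≤ ((J.biUnion A) \ U₀).card := by omega
          exact h4.trans (Finset.card_le_card (hcover f hf J))
      -- surplus-1 for the deleted family, for non-full J (any f)
      have hnonfull : ∀ f ∈ sdrOn A I₀, ∀ J ⊆ I \ I₀, J.Nonempty → I₀ ∪ J ≠ I →
          J.card + 1 ≤ (J.biUnion (delFam A I₀ f)).card := by
        intro f hf J hJ hJne hJneq
        have hlt : I₀.card < (I₀ ∪ J).card := by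
          have := huncard J hJ
          have := hJne.card_pos
          omega
        have h2 := hmax' (I₀ ∪ J) (hunsub J hJ) hJneq hlt
        have h3 := hbase J hJ
        have h4 := huncard J hJ
        have h5 : J.card + 1 ≤ ((J.biUnion A) \ U₀).card := by omega
        exact h5.trans (Finset.card_le_card (hcover f hf J))
      -- choose f₀ making the deleted family a (1, m)-family on I \ I₀
      obtain ⟨f₀, hf₀, hsur⟩ : ∃ f₀ ∈ sdrOn A I₀, ∀ J ⊆ I \ I₀, J.Nonempty →
          J.card + 1 ≤ (J.biUnion (delFam A I₀ f₀)).card := by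
        by_cases hfull : I.card + 2 ≤ (I.biUnion A).card
        · -- subcase a
          obtain ⟨f₀, hf₀⟩ := sdrOn_nonempty (A := A) (I := I₀)
            (fun J hJ => surplus0 J (hJ.trans hI₀sub))
          refine ⟨f₀, hf₀, fun J hJ hJne => ?_⟩
          by_cases hJeq : I₀ ∪ J = I
          · have h2 := hbase J hJ
            rw [hJeq] at h2
            have h4 := huncard J hJ
            have h4' : I₀.card + J.card = I.card := by rw [← h4, hJeq]
            have h5 : J.card + 1 ≤ ((J.biUnion A) \ U₀).card := by omega
            exact h5.trans (Finset.card_le_card (hcover f₀ hf₀ J))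
          · exact hnonfull f₀ hf₀ J hJ hJne hJeq
        · -- subcase b
          have hIuni : (I.biUnion A).card = I.card + 1 :=
            le_antisymm (by omega) (hA I Finset.Subset.rfl hIne)
          have hIdne : (I \ I₀).Nonempty := by
            rw [Finset.sdiff_nonempty]
            intro hcon
            exact hI₀neq (Finset.Subset.antisymm hI₀sub hcon)
          have hU₀I : U₀ ⊆ I.biUnion A := Finset.biUnion_subset_biUnion_of_subset_left A hI₀sub
          have hTne : (((I \ I₀).biUnion A) ∩ U₀).Nonempty := by
            by_contra hT
            rw [Finset.not_nonempty_iff_eq_empty] at hT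
            have hsub2 : (I \ I₀).biUnion A ⊆ (I.biUnion A) \ U₀ := by
              intro x hx
              refine Finset.mem_sdiff.2 ⟨Finset.biUnion_subset_biUnion_of_subset_left A
                (Finset.sdiff_subset) hx, fun hxU => ?_⟩
              have : x ∈ ((I \ I₀).biUnion A) ∩ U₀ := Finset.mem_inter.2 ⟨hx, hxU⟩
              simp [hT] at this
            have hc1 : ((I.biUnion A) \ U₀).card = (I.biUnion A).card - U₀.card :=
              Finset.card_sdiff_of_subset hU₀I
            have hc2 := Finset.card_le_card hsub2
            have hc3 := hA (I \ I₀) (Finset.sdiff_subset) hIdne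
            have hc4 : (I \ I₀).card = I.card - I₀.card := Finset.card_sdiff_of_subset hI₀sub
            have hc5 := Finset.card_le_card hI₀sub
            omega
          obtain ⟨t, ht⟩ := hTne
          have htJ : t ∈ (I \ I₀).biUnion A := (Finset.mem_inter.1 ht).1
          have htU : t ∈ U₀ := (Finset.mem_inter.1 ht).2
          obtain ⟨f₀, hf₀'⟩ := sdrOn_nonempty (A := fun j => A j \ {t}) (I := I₀) (by
            intro J hJ
            have h1 := surplus0 J (hJ.trans hI₀sub)
            rw [biUnion_del A {t} J]
            have := Finset.card_le_card_sdiff_add_card (s := J.biUnion A) (t := ({t} : Finset ℕ))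
            simp only [Finset.card_singleton] at this
            rcases J.eq_empty_or_nonempty with rfl | hJne
            · simp
            · have h2 := hA J (hJ.trans hI₀sub) hJne
              omega)
          have hf₀ : f₀ ∈ sdrOn A I₀ := sdrOn_mono (fun i => Finset.sdiff_subset) hf₀'
          have htimg : t ∉ I₀.image f₀ := by
            intro hcon
            obtain ⟨i, hi, hfi⟩ := Finset.mem_image.1 hcon
            have := (mem_sdrOn.1 hf₀').1.1 i hi
            rw [hfi] at this
            exact (Finset.mem_sdiff.1 this).2 (Finset.mem_singleton_self t)
          refine ⟨f₀, hf₀, fun J hJ hJne => ?_⟩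
          by_cases hJeq : I₀ ∪ J = I
          · have hJis : J = I \ I₀ := by
              apply Finset.Subset.antisymm hJ
              intro x hx
              obtain ⟨hxI, hxI₀⟩ := Finset.mem_sdiff.1 hx
              rcases Finset.mem_union.1 (by rw [hJeq]; exact hxI) with h | h
              · exact absurd h hxI₀
              · exact h
            have ht' : t ∈ J.biUnion A := by rw [hJis]; exact htJ
            have hins : insert t ((J.biUnion A) \ U₀) ⊆ J.biUnion (delFam A I₀ f₀) := by
              rw [show J.biUnion (delFam A I₀ f₀) = J.biUnion A \ I₀.image f₀ from
                biUnion_del A _ J]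
              intro x hx
              rcases Finset.mem_insert.1 hx with rfl | hx'
              · exact Finset.mem_sdiff.2 ⟨ht', htimg⟩
              · exact Finset.sdiff_subset_sdiff Finset.Subset.rfl (himg f₀ hf₀) hx'
            have htnot : t ∉ (J.biUnion A) \ U₀ := fun h => (Finset.mem_sdiff.1 h).2 htU
            have hcins : (insert t ((J.biUnion A) \ U₀)).card = ((J.biUnion A) \ U₀).card + 1 :=
              Finset.card_insert_of_notMem htnot
            have h2 := hbase J hJ
            rw [hJeq] at h2
            have h4 := huncard J hJ
            have h4' : I₀.card + J.card = I.card := by rw [← h4, hJeq]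
            have h6 := Finset.card_le_card hins
            omega
          · exact hnonfull f₀ hf₀ J hJ hJne hJeq
      -- assemble
      have m1 := master hI₀sub hf₀ hext
      have hc₀lt : I₀.card < I.card := Finset.card_lt_card (Finset.ssubset_iff_subset_ne.2 ⟨hI₀sub, hI₀neq⟩)
      have m2 := ih A I₀ (by omega) (fun J hJ => hA J (hJ.trans hI₀sub))
      have hcardsd : (I \ I₀).card = I.card - I₀.card := Finset.card_sdiff_of_subset hI₀sub
      have m3 := ih (delFam A I₀ f₀) (I \ I₀) (by have := hI₀ne.card_pos; omega) hsur
      have := hI₀ne.card_pos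
      omega
    · -- Case 1: no proper nonempty critical subset
      classical
      push_neg at hcrit
      obtain ⟨i₀, hi₀⟩ := hIne
      have hsing : ({i₀} : Finset (Fin n)) ⊆ I := Finset.singleton_subset_iff.2 hi₀
      have hAi₀ : 2 ≤ (A i₀).card := by
        have := hA {i₀} hsing ⟨i₀, Finset.mem_singleton_self i₀⟩
        simpa using this
      by_cases hI1 : I = {i₀}
      · rw [hI1, card_sdrOn_singleton]
        simp only [Finset.card_singleton]
        omega
      · have hstep : ∀ f ∈ sdrOn A {i₀}, ∀ J ⊆ I \ {i₀}, J.Nonempty →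
            J.card + 1 ≤ (J.biUnion (delFam A {i₀} f)).card := by
          intro f hf J hJ hJne
          have hns : J ≠ I := by
            intro h
            have : i₀ ∈ J := h ▸ hi₀
            exact (Finset.mem_sdiff.1 (hJ this)).2 (Finset.mem_singleton_self i₀)
          have h2 : J.card + 2 ≤ (J.biUnion A).card :=
            hcrit J (hJ.trans (Finset.sdiff_subset)) hJne hns
          rw [show J.biUnion (delFam A {i₀} f) = J.biUnion A \ ({i₀} : Finset (Fin n)).image f from
            biUnion_del A _ J]
          have himgc : (({i₀} : Finset (Fin n)).image f).card ≤ 1 := by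
            calc _ ≤ ({i₀} : Finset (Fin n)).card := Finset.card_image_le
              _ = 1 := Finset.card_singleton i₀
          have := Finset.card_le_card_sdiff_add_card (s := J.biUnion A)
            (t := ({i₀} : Finset (Fin n)).image f)
          omega
        have hcardsd : (I \ {i₀}).card = I.card - 1 := by
          rw [Finset.card_sdiff_of_subset hsing, Finset.card_singleton]
        have hext1 : ∀ f ∈ sdrOn A {i₀}, (sdrOn (delFam A {i₀} f) (I \ {i₀})).Nonempty := by
          intro f hf
          have := ih (delFam A {i₀} f) (I \ {i₀}) (by omega) (hstep f hf)
          exact Finset.card_pos.1 (by omega)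
        obtain ⟨f₀, hf₀⟩ := sdrOn_nonempty (A := A) (I := {i₀})
          (fun J hJ => surplus0 J (hJ.trans hsing))
        have m1 := master hsing hf₀ hext1
        have m2 : (sdrOn A {i₀}).card = (A i₀).card := card_sdrOn_singleton A i₀
        have m3 := ih (delFam A {i₀} f₀) (I \ {i₀}) (by omega) (hstep f₀ hf₀)
        omega

lemma numSDR_eq (A : Fin n → Finset ℕ) : numSDR A = (sdrOn A Finset.univ).card := by
  unfold numSDR sdrOn
  congr 1
  ext f
  simp [Fintype.mem_piFinset, Set.injOn_univ]

theorem lower_bound (A : Fin n → Finset ℕ) (hA : IsTNFamily 1 A) : n + 1 ≤ numSDR A := by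
  rw [numSDR_eq]
  have := lower_aux n A Finset.univ (by simp) (fun J _ hJ => hA J hJ)
  simpa using this

/-- The extremal family for t = 1. -/
def exFam (n : ℕ) : Fin n → Finset ℕ := fun i => {(i : ℕ) + 1, n + 1}

lemma exFam_isTN (n : ℕ) : IsTNFamily 1 (exFam n) := by
  intro J hJ
  have hbu : J.biUnion (exFam n) = insert (n + 1) (J.image (fun i : Fin n => (i : ℕ) + 1)) := by
    ext x
    simp only [Finset.mem_biUnion, exFam, Finset.mem_insert, Finset.mem_image,
      Finset.mem_singleton]
    constructor
    · rintro ⟨i, hi, h | h⟩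
      · exact Or.inr ⟨i, hi, h.symm⟩
      · exact Or.inl h
    · rintro (rfl | ⟨i, hi, rfl⟩)
      · obtain ⟨i, hi⟩ := hJ
        exact ⟨i, hi, Or.inr rfl⟩
      · exact ⟨i, hi, Or.inl rfl⟩
  rw [hbu]
  have hnot : (n + 1) ∉ J.image (fun i : Fin n => (i : ℕ) + 1) := by
    simp only [Finset.mem_image]
    rintro ⟨i, _, hi⟩
    have := i.2
    omega
  rw [Finset.card_insert_of_notMem hnot,
    Finset.card_image_of_injOn (fun a _ b _ h => by
      have h2 : (a : ℕ) = (b : ℕ) := by omega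
      exact Fin.ext h2)]

def phiEx (n : ℕ) : Option (Fin n) → (Fin n → ℕ) := fun o i =>
  if some i = o then n + 1 else (i : ℕ) + 1

lemma numSDR_exFam (n : ℕ) : numSDR (exFam n) = n + 1 := by
  classical
  have hset : (Fintype.piFinset (exFam n)).filter Function.Injective =
      Finset.univ.image (phiEx n) := by
    ext f
    simp only [Finset.mem_filter, Fintype.mem_piFinset, Finset.mem_image, Finset.mem_univ,
      true_and]
    constructor
    · rintro ⟨hmem, hinj⟩
      by_cases hex : ∃ k, f k = n + 1
      · obtain ⟨k, hk⟩ := hex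
        refine ⟨some k, ?_⟩
        funext i
        by_cases hik : i = k
        · subst hik; simp [phiEx, hk]
        · have hi := hmem i
          simp only [exFam, Finset.mem_insert, Finset.mem_singleton] at hi
          rcases hi with h | h
          · simp [phiEx, hik, h]
          · exact absurd (hinj (h.trans hk.symm)) hik
      · push_neg at hex
        refine ⟨none, ?_⟩
        funext i
        have hi := hmem i
        simp only [exFam, Finset.mem_insert, Finset.mem_singleton] at hi
        rcases hi with h | h
        · simp [phiEx, h]
        · exact absurd h (hex i)
    · rintro ⟨o, rfl⟩
      constructor
      · intro i
        simp only [exFam, Finset.mem_insert, Finset.mem_singleton, phiEx]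
        by_cases h : some i = o
        · simp [h]
        · simp [h]
      · intro a b hab
        simp only [phiEx] at hab
        by_cases ha : some a = o <;> by_cases hb : some b = o
        · rw [← hb] at ha; exact Option.some_injective _ ha
        · rw [if_pos ha, if_neg hb] at hab
          have := b.2; omega
        · rw [if_neg ha, if_pos hb] at hab
          have := a.2; omega
        · rw [if_neg ha, if_neg hb] at hab
          exact Fin.ext (by omega)
  have hinj : Function.Injective (phiEx n) := by
    intro o o' h
    rcases o with _ | k <;> rcases o' with _ | k'
    · rfl
    · exfalso
      have h1 : (k' : ℕ) + 1 = n + 1 := by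
        have := congrFun h k'
        simpa [phiEx] using this
      have := k'.2; omega
    · exfalso
      have h1 : (n : ℕ) + 1 = (k : ℕ) + 1 := by
        have := congrFun h k
        simpa [phiEx] using this
      have := k.2; omega
    · have hkk : k = k' := by
        by_contra hne
        have := congrFun h k
        simp [phiEx, hne] at this
        have := k.2; omega
      rw [hkk]
  rw [numSDR, hset, Finset.card_image_of_injective _ hinj]
  simp

theorem M_one_n (n : ℕ) (hn : 1 ≤ n) :
    (∀ A : Fin n → Finset ℕ, IsTNFamily 1 A → n + 1 ≤ numSDR A) ∧
      ∃ A : Fin n → Finset ℕ, IsTNFamily 1 A ∧ numSDR A = n + 1 :=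
  ⟨fun A hA => lower_bound A hA, exFam n, exFam_isTN n, numSDR_exFam n⟩
end

section
/- Let F be a valued (t,n)-family with valuation (a_1,...,a_n) and let {x,y} be an exclusive pair. Define A_i(x,y) = (A_i \ {x}) ∪ {y} if i ∈ I_x ∩ I_y^c, and A_i(x,y) = A_i otherwise. Then for any I ⊆ {1,...,n}: |⋃_{i∈I} A_i(x,y)| = |⋃_{i∈I} A_i| − 1 if I ∩ I_x ∩ I_y = ∅, I ∩ I_x ∩ I_y^c ≠ ∅ and I ∩ I_x^c ∩ I_y ≠ ∅; and |⋃_{i∈I} A_i(x,y)| = |⋃_{i∈I} A_i| otherwise. -/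
open Finset

theorem union_card_swapFam (t n : ℕ) (a : Fin n → ℕ) (A : Fin n → Finset ℕ)
    (hF : IsValuedTN t a A) (x y : ℕ) (hxy : Exclusive A x y) :
    (∀ I : Finset (Fin n),
        (I ∩ Ix A x ∩ Ix A y = ∅ ∧ (I ∩ (Ix A x \ Ix A y)).Nonempty ∧
          (I ∩ (Ix A y \ Ix A x)).Nonempty) →
        (I.biUnion (swapFam A x y)).card = (I.biUnion A).card - 1) ∧
      ∀ I : Finset (Fin n),
        ¬(I ∩ Ix A x ∩ Ix A y = ∅ ∧ (I ∩ (Ix A x \ Ix A y)).Nonempty ∧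
          (I ∩ (Ix A y \ Ix A x)).Nonempty) →
        (I.biUnion (swapFam A x y)).card = (I.biUnion A).card := by
  classical
  obtain ⟨⟨p0, hp0⟩, ⟨q0, hq0⟩⟩ := hxy
  simp only [Ix, mem_sdiff, mem_filter, mem_univ, true_and] at hp0 hq0
  have hne : x ≠ y := fun h => hp0.2 (h ▸ hp0.1)
  constructor
  · rintro I ⟨h1, h2, h3⟩
    obtain ⟨p, hp⟩ := h2
    obtain ⟨q, hq⟩ := h3
    simp only [Ix, mem_inter, mem_sdiff, mem_filter, mem_univ, true_and] at hp hq
    have hempty : ∀ i ∈ I, ¬(x ∈ A i ∧ y ∈ A i) := by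
      intro i hi hc
      have : i ∈ I ∩ Ix A x ∩ Ix A y := by
        simp [Ix, mem_inter, mem_filter, hi, hc.1, hc.2]
      rw [h1] at this
      exact absurd this (notMem_empty i)
    have hset : I.biUnion (swapFam A x y) = (I.biUnion A) \ {x} := by
      ext z
      simp only [mem_biUnion, mem_sdiff, mem_singleton, swapFam]
      constructor
      · rintro ⟨i, hi, hz⟩
        split_ifs at hz with hcond
        · rcases mem_insert.1 hz with rfl | hz'
          · exact ⟨⟨q, hq.1, hq.2.1⟩, fun h => hne h.symm⟩
          · rw [mem_sdiff, mem_singleton] at hz'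
            exact ⟨⟨i, hi, hz'.1⟩, hz'.2⟩
        · refine ⟨⟨i, hi, hz⟩, ?_⟩
          rintro rfl
          exact hempty i hi ⟨hz, by tauto⟩
      · rintro ⟨⟨i, hi, hz⟩, hzx⟩
        refine ⟨i, hi, ?_⟩
        split_ifs with hcond
        · exact mem_insert_of_mem (mem_sdiff.2 ⟨hz, by simpa using hzx⟩)
        · exact hz
    have hxS : x ∈ I.biUnion A := mem_biUnion.2 ⟨p, hp.1, hp.2.1⟩
    rw [hset, card_sdiff_of_subset (by simpa using hxS)]
    simp
  · intro I hI
    by_cases h2 : (I ∩ (Ix A x \ Ix A y)).Nonempty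
    · by_cases h1 : I ∩ Ix A x ∩ Ix A y = ∅
      · -- then third condition must fail
        have h3 : ¬(I ∩ (Ix A y \ Ix A x)).Nonempty := fun h3 => hI ⟨h1, h2, h3⟩
        obtain ⟨p, hp⟩ := h2
        simp only [Ix, mem_inter, mem_sdiff, mem_filter, mem_univ, true_and] at hp
        have hempty : ∀ i ∈ I, ¬(x ∈ A i ∧ y ∈ A i) := by
          intro i hi hc
          have : i ∈ I ∩ Ix A x ∩ Ix A y := by
            simp [Ix, mem_inter, mem_filter, hi, hc.1, hc.2]
          rw [h1] at this
          exact absurd this (notMem_empty i)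
        have hyempty : ∀ i ∈ I, ¬(y ∈ A i ∧ x ∉ A i) := by
          intro i hi hc
          exact h3 ⟨i, by simp [Ix, mem_inter, mem_sdiff, mem_filter, hi, hc.1, hc.2]⟩
        have hynot : y ∉ I.biUnion A := by
          rw [mem_biUnion]
          rintro ⟨i, hi, hyi⟩
          by_cases hx : x ∈ A i
          · exact hempty i hi ⟨hx, hyi⟩
          · exact hyempty i hi ⟨hyi, hx⟩
        have hset : I.biUnion (swapFam A x y) = insert y ((I.biUnion A) \ {x}) := by
          ext z
          simp only [mem_biUnion, mem_insert, mem_sdiff, mem_singleton, swapFam]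
          constructor
          · rintro ⟨i, hi, hz⟩
            split_ifs at hz with hcond
            · rcases mem_insert.1 hz with rfl | hz'
              · exact Or.inl rfl
              · rw [mem_sdiff, mem_singleton] at hz'
                exact Or.inr ⟨⟨i, hi, hz'.1⟩, hz'.2⟩
            · refine Or.inr ⟨⟨i, hi, hz⟩, ?_⟩
              rintro rfl
              exact hempty i hi ⟨hz, by tauto⟩
          · rintro (rfl | ⟨⟨i, hi, hz⟩, hzx⟩)
            · exact ⟨p, hp.1, by simp [hp.2.1, hp.2.2]⟩
            · refine ⟨i, hi, ?_⟩
              split_ifs with hcond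
              · exact mem_insert_of_mem (mem_sdiff.2 ⟨hz, by simpa using hzx⟩)
              · exact hz
        have hxS : x ∈ I.biUnion A := mem_biUnion.2 ⟨p, hp.1, hp.2.1⟩
        have h1le : 1 ≤ (I.biUnion A).card := card_pos.2 ⟨x, hxS⟩
        rw [hset, card_insert_of_notMem (by simp [hynot]),
          card_sdiff_of_subset (by simpa using hxS)]
        simpa using Nat.sub_add_cancel h1le
      · obtain ⟨r, hr⟩ := Finset.nonempty_of_ne_empty h1
        simp only [Ix, mem_inter, mem_sdiff, mem_filter, mem_univ, true_and] at hr
        have hset : I.biUnion (swapFam A x y) = I.biUnion A := by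
          ext z
          simp only [mem_biUnion, swapFam]
          constructor
          · rintro ⟨i, hi, hz⟩
            split_ifs at hz with hcond
            · rcases mem_insert.1 hz with rfl | hz'
              · exact ⟨r, hr.1.1, hr.2⟩
              · exact ⟨i, hi, (mem_sdiff.1 hz').1⟩
            · exact ⟨i, hi, hz⟩
          · rintro ⟨i, hi, hz⟩
            by_cases hcond : x ∈ A i ∧ y ∉ A i
            · by_cases hzx : z = x
              · subst hzx
                refine ⟨r, hr.1.1, ?_⟩
                simp [swapFam, hr.2, hr.1.2]
              · exact ⟨i, hi, by simp [hcond, hz, hzx]⟩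
            · exact ⟨i, hi, by simp [hcond, hz]⟩
        rw [hset]
    · have hset : I.biUnion (swapFam A x y) = I.biUnion A := by
        apply biUnion_congr rfl
        intro i hi
        have : ¬(x ∈ A i ∧ y ∉ A i) := by
          intro hc
          exact h2 ⟨i, by simp [Ix, mem_inter, mem_sdiff, mem_filter, hi, hc.1, hc.2]⟩
        simp [swapFam, this]
      rw [hset]
end

section
/- Let F be a valued (t,n)-family with valuation (a_1,...,a_n) and {x,y} an exclusive pair. The modified family F_y^x = (A_1(x,y),...,A_n(x,y)) (replace x by y in each A_i with i ∈ I_x ∩ I_y^c) is again a valued (t,n)-family with valuation (a_1,...,a_n) if and only if {x,y} is unsaturated for F. -/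
open Finset

section AuxSwap

variable {n : ℕ} {A : Fin n → Finset ℕ} {x y : ℕ}

lemma mem_Ix_iff {i : Fin n} : i ∈ Ix A x ↔ x ∈ A i := by
  simp [Ix]

lemma mem_swap_x (hxy : x ≠ y) (i : Fin n) :
    x ∈ swapFam A x y i ↔ x ∈ A i ∧ y ∈ A i := by
  unfold swapFam
  split_ifs with h
  · simp only [mem_insert, mem_sdiff, mem_singleton]
    constructor
    · rintro (h1 | ⟨-, h2⟩)
      · exact absurd h1 hxy
      · exact (h2 trivial).elim
    · rintro ⟨-, h2⟩; exact absurd h2 h.2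
  · tauto

lemma mem_swap_y (i : Fin n) :
    y ∈ swapFam A x y i ↔ y ∈ A i ∨ x ∈ A i := by
  unfold swapFam
  split_ifs with h
  · simp only [mem_insert, mem_sdiff, mem_singleton]; tauto
  · tauto

lemma mem_swap_other {z : ℕ} (hz1 : z ≠ x) (hz2 : z ≠ y) (i : Fin n) :
    z ∈ swapFam A x y i ↔ z ∈ A i := by
  unfold swapFam
  split_ifs with h <;> simp [hz1, hz2]

lemma card_swap (hxy : x ≠ y) (i : Fin n) :
    (swapFam A x y i).card = (A i).card := by
  unfold swapFam
  split_ifs with h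
  · obtain ⟨hx, hy⟩ := h
    rw [card_insert_of_notMem (by simp [hy]), card_sdiff_of_subset (by simpa using hx)]
    have h1 : 1 ≤ (A i).card := card_pos.2 ⟨x, hx⟩
    simp only [card_singleton]
    omega
  · rfl

lemma empty_inter_elim {I : Finset (Fin n)} (h1 : I ∩ Ix A x ∩ Ix A y = ∅) {i : Fin n}
    (hiI : i ∈ I) (hx : x ∈ A i) (hy : y ∈ A i) : False :=
  eq_empty_iff_forall_notMem.1 h1 i
    (by rw [mem_inter, mem_inter, mem_Ix_iff, mem_Ix_iff]; exact ⟨⟨hiI, hx⟩, hy⟩)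

lemma x_not_mem_swap_union {I : Finset (Fin n)} (hxy : x ≠ y)
    (h1 : I ∩ Ix A x ∩ Ix A y = ∅) : x ∉ I.biUnion (swapFam A x y) := by
  intro hmem
  obtain ⟨i, hiI, hi⟩ := mem_biUnion.1 hmem
  rw [mem_swap_x hxy] at hi
  exact empty_inter_elim h1 hiI hi.1 hi.2

/-- Key lemma, part 1: in the "saturation configuration" the union of the swapped family is the
union of the old family minus `x`. -/
lemma key_union_eq (hxy : x ≠ y) {I : Finset (Fin n)}
    (h1 : I ∩ Ix A x ∩ Ix A y = ∅) (h2 : (I ∩ (Ix A x \ Ix A y)).Nonempty)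
    (h3 : (I ∩ (Ix A y \ Ix A x)).Nonempty) :
    I.biUnion (swapFam A x y) = (I.biUnion A).erase x ∧ x ∈ I.biUnion A := by
  obtain ⟨i1, hi1⟩ := h2
  obtain ⟨i2, hi2⟩ := h3
  simp only [mem_inter, mem_sdiff, mem_Ix_iff] at hi1 hi2
  have hxU : x ∈ I.biUnion A := mem_biUnion.2 ⟨i1, hi1.1, hi1.2.1⟩
  refine ⟨?_, hxU⟩
  ext z
  by_cases hzx : z = x
  · subst hzx
    constructor
    · intro hmem; exact absurd hmem (x_not_mem_swap_union hxy h1)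
    · intro hmem; exact absurd hmem (notMem_erase _ _)
  by_cases hzy : z = y
  · subst hzy
    constructor
    · intro _
      exact mem_erase.2 ⟨fun h => hxy h.symm, mem_biUnion.2 ⟨i2, hi2.1, hi2.2.1⟩⟩
    · intro _
      exact mem_biUnion.2 ⟨i2, hi2.1, (mem_swap_y i2).2 (Or.inl hi2.2.1)⟩
  · constructor
    · intro hmem
      obtain ⟨i, hiI, hi⟩ := mem_biUnion.1 hmem
      exact mem_erase.2 ⟨hzx, mem_biUnion.2 ⟨i, hiI, (mem_swap_other hzx hzy i).1 hi⟩⟩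
    · intro hmem
      obtain ⟨i, hiI, hi⟩ := mem_biUnion.1 (mem_erase.1 hmem).2
      exact mem_biUnion.2 ⟨i, hiI, (mem_swap_other hzx hzy i).2 hi⟩

/-- Key lemma, part 2: outside the saturation configuration the cardinality does not drop. -/
lemma key_union_le (hxy : x ≠ y) {I : Finset (Fin n)}
    (hnc : ¬ (I ∩ Ix A x ∩ Ix A y = ∅ ∧ (I ∩ (Ix A x \ Ix A y)).Nonempty ∧
        (I ∩ (Ix A y \ Ix A x)).Nonempty)) :
    (I.biUnion A).card ≤ (I.biUnion (swapFam A x y)).card := by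
  by_cases h2 : (I ∩ (Ix A x \ Ix A y)).Nonempty
  · by_cases h1 : I ∩ Ix A x ∩ Ix A y = ∅
    · -- then the third condition fails: `y` does not occur in the old union
      have h3 : ¬ (I ∩ (Ix A y \ Ix A x)).Nonempty := by tauto
      have hyU : y ∉ I.biUnion A := by
        intro hmem
        obtain ⟨i, hiI, hi⟩ := mem_biUnion.1 hmem
        by_cases hx : x ∈ A i
        · exact empty_inter_elim h1 hiI hx hi
        · exact h3 ⟨i, by simp only [mem_inter, mem_sdiff, mem_Ix_iff]; exact ⟨hiI, hi, hx⟩⟩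
      obtain ⟨i1, hi1⟩ := h2
      simp only [mem_inter, mem_sdiff, mem_Ix_iff] at hi1
      have hxU : x ∈ I.biUnion A := mem_biUnion.2 ⟨i1, hi1.1, hi1.2.1⟩
      have hT : I.biUnion (swapFam A x y) = insert y ((I.biUnion A).erase x) := by
        ext z
        by_cases hzx : z = x
        · subst hzx
          constructor
          · intro hmem; exact absurd hmem (x_not_mem_swap_union hxy h1)
          · intro hmem
            rcases mem_insert.1 hmem with h | h
            · exact absurd h hxy
            · exact absurd h (notMem_erase _ _)
        by_cases hzy : z = y
        · subst hzy
          constructor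
          · intro _; exact mem_insert_self _ _
          · intro _
            exact mem_biUnion.2 ⟨i1, hi1.1, (mem_swap_y i1).2 (Or.inr hi1.2.1)⟩
        · constructor
          · intro hmem
            obtain ⟨i, hiI, hi⟩ := mem_biUnion.1 hmem
            exact mem_insert.2 (Or.inr (mem_erase.2
              ⟨hzx, mem_biUnion.2 ⟨i, hiI, (mem_swap_other hzx hzy i).1 hi⟩⟩))
          · intro hmem
            rcases mem_insert.1 hmem with h | h
            · exact absurd h hzy
            · obtain ⟨i, hiI, hi⟩ := mem_biUnion.1 (mem_erase.1 h).2
              exact mem_biUnion.2 ⟨i, hiI, (mem_swap_other hzx hzy i).2 hi⟩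
      rw [hT, card_insert_of_notMem (fun h => hyU (mem_erase.1 h).2),
        card_erase_of_mem hxU]
      have h1' : 1 ≤ (I.biUnion A).card := card_pos.2 ⟨x, hxU⟩
      omega
    · -- `x` stays in the new union: the old union is contained in the new one
      rw [← not_nonempty_iff_eq_empty, not_not] at h1
      obtain ⟨i0, hi0⟩ := h1
      simp only [mem_inter, mem_Ix_iff] at hi0
      apply card_le_card
      intro z hz
      obtain ⟨i, hiI, hi⟩ := mem_biUnion.1 hz
      by_cases hzx : z = x
      · subst hzx
        exact mem_biUnion.2 ⟨i0, hi0.1.1, (mem_swap_x hxy i0).2 ⟨hi0.1.2, hi0.2⟩⟩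
      by_cases hzy : z = y
      · subst hzy
        exact mem_biUnion.2 ⟨i, hiI, (mem_swap_y i).2 (Or.inl hi)⟩
      · exact mem_biUnion.2 ⟨i, hiI, (mem_swap_other hzx hzy i).2 hi⟩
  · -- no set is modified on `I`
    have hT : I.biUnion (swapFam A x y) = I.biUnion A := by
      apply biUnion_congr rfl
      intro i hiI
      unfold swapFam
      split_ifs with h
      · exfalso
        apply h2
        refine ⟨i, ?_⟩
        simp only [mem_inter, mem_sdiff, mem_Ix_iff]
        exact ⟨hiI, h.1, h.2⟩
      · rfl
    rw [hT]

end AuxSwap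

theorem swapFam_valued_iff_unsaturated (t n : ℕ) (a : Fin n → ℕ) (A : Fin n → Finset ℕ)
    (hF : IsValuedTN t a A) (x y : ℕ) (hxy : Exclusive A x y) :
    IsValuedTN t a (swapFam A x y) ↔ ¬ Saturated t a A x y := by
  obtain ⟨ha, hcard, hunion⟩ := hF
  obtain ⟨⟨i1, hi1⟩, ⟨i2, hi2⟩⟩ := hxy
  simp only [mem_sdiff, mem_Ix_iff] at hi1 hi2
  have hne : x ≠ y := by rintro rfl; exact hi1.2 hi1.1
  constructor
  · rintro ⟨-, -, hB⟩ ⟨I, h1, h2, h3, h4⟩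
    obtain ⟨hT, hxU⟩ := key_union_eq hne h1 h2 h3
    obtain ⟨j1, hj1⟩ := h2
    obtain ⟨j2, hj2⟩ := h3
    simp only [mem_inter, mem_sdiff, mem_Ix_iff] at hj1 hj2
    have hjne : j1 ≠ j2 := by rintro rfl; exact hj1.2.2 hj2.2.1
    have hI2 : 2 ≤ I.card := by
      have hsub : ({j1, j2} : Finset (Fin n)) ⊆ I := by
        intro j hj
        simp only [mem_insert, mem_singleton] at hj
        rcases hj with rfl | rfl
        · exact hj1.1
        · exact hj2.1
      calc 2 = ({j1, j2} : Finset (Fin n)).card := by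
                rw [card_insert_of_notMem (by simp [hjne]), card_singleton]
           _ ≤ I.card := card_le_card hsub
    have hle := hB I hI2
    rw [hT, card_erase_of_mem hxU, h4] at hle
    have hpos : 0 < a j1 := ha j1
    have hsum : a j1 ≤ ∑ i ∈ I, a i :=
      single_le_sum (fun i _ => Nat.zero_le _) hj1.1
    omega
  · intro hns
    refine ⟨ha, fun i => by rw [card_swap hne, hcard], fun I hI2 => ?_⟩
    by_cases hc : I ∩ Ix A x ∩ Ix A y = ∅ ∧ (I ∩ (Ix A x \ Ix A y)).Nonempty ∧
        (I ∩ (Ix A y \ Ix A x)).Nonempty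
    · obtain ⟨hT, hxU⟩ := key_union_eq hne hc.1 hc.2.1 hc.2.2
      have hne' : (I.biUnion A).card ≠ (∑ i ∈ I, a i) + t := fun h =>
        hns ⟨I, hc.1, hc.2.1, hc.2.2, h⟩
      have hge := hunion I hI2
      rw [hT, card_erase_of_mem hxU]
      omega
    · have hge := hunion I hI2
      have hle := key_union_le hne hc
      omega
end

section
/- Let t ≥ 2 and let F be a valued (t,n)-family with valuation (a_1,...,a_n) containing an unsaturated exclusive pair {x,y}. Then the modified family F_y^x (replacing x by y in every A_i with i ∈ I_x ∩ I_y^c) satisfies N(F_y^x) < N(F). -/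
open Finset

theorem numSDR_swapFam_lt (t n : ℕ) (ht : 2 ≤ t) (a : Fin n → ℕ) (A : Fin n → Finset ℕ)
    (hF : IsValuedTN t a A) (x y : ℕ) (hxy : Exclusive A x y)
    (hsat : ¬ Saturated t a A x y) :
    numSDR (swapFam A x y) < numSDR A := by
  classical
  obtain ⟨ha, hcard, hval⟩ := hF
  -- TN property
  have htn : ∀ s : Finset (Fin n), s.Nonempty → s.card + t ≤ (s.biUnion A).card := by
    intro s hs
    rcases Nat.lt_or_ge s.card 2 with h | h
    · have h1 : s.card = 1 := by
        have := Finset.card_pos.mpr hs; omega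
      obtain ⟨k, hk⟩ := Finset.card_eq_one.mp h1
      subst hk
      rw [Finset.singleton_biUnion, hcard k]
      have := ha k; simp; omega
    · have hle : s.card ≤ ∑ i ∈ s, a i := by
        rw [Finset.card_eq_sum_ones]
        exact Finset.sum_le_sum fun i _ => ha i
      have := hval s h; omega
  obtain ⟨i, hi⟩ := hxy.1
  obtain ⟨j, hj⟩ := hxy.2
  simp only [Ix, Finset.mem_sdiff, Finset.mem_filter, Finset.mem_univ, true_and] at hi hj
  have hxyne : x ≠ y := fun h => hi.2 (h ▸ hi.1)
  have hij : i ≠ j := fun h => hj.2 (h ▸ hi.1)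
  set B : Fin n → Finset ℕ :=
    fun k => if k = i then {x} else if k = j then {y} else A k \ {x, y} with hB
  have hall : ∀ s : Finset (Fin n), s.card ≤ (s.biUnion B).card := by
    intro s
    set s' : Finset (Fin n) := s \ {i, j} with hs'
    set s₂ : Finset (Fin n) := s ∩ {i, j} with hs₂
    have hcongr : s'.biUnion B = (s'.biUnion A) \ {x, y} := by
      ext u
      simp only [Finset.mem_biUnion, Finset.mem_sdiff, hs', Finset.mem_insert,
        Finset.mem_singleton, hB]
      constructor
      · rintro ⟨k, ⟨hk, hknot⟩, hu⟩
        push_neg at hknot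
        simp only [if_neg hknot.1, if_neg hknot.2, Finset.mem_sdiff, Finset.mem_insert,
          Finset.mem_singleton] at hu
        exact ⟨⟨k, ⟨hk, by push_neg; exact hknot⟩, hu.1⟩, hu.2⟩
      · rintro ⟨⟨k, ⟨hk, hknot⟩, hu⟩, hu2⟩
        push_neg at hknot
        refine ⟨k, ⟨hk, by push_neg; exact hknot⟩, ?_⟩
        simp only [if_neg hknot.1, if_neg hknot.2, Finset.mem_sdiff, Finset.mem_insert,
          Finset.mem_singleton]
        exact ⟨hu, hu2⟩
    have h1 : s'.card ≤ (s'.biUnion B).card := by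
      rcases s'.eq_empty_or_nonempty with h | h
      · simp [h]
      · rw [hcongr]
        have h2 := htn s' h
        have h3 : (s'.biUnion A).card ≤ ((s'.biUnion A) \ ({x, y} : Finset ℕ)).card
            + ({x, y} : Finset ℕ).card :=
          Finset.card_le_card_sdiff_add_card
        have h4 : ({x, y} : Finset ℕ).card ≤ 2 := Finset.card_insert_le _ _ |>.trans (by simp)
        omega
    have hcup : s.biUnion B = s'.biUnion B ∪ s₂.biUnion B := by
      ext u
      simp only [hs', hs₂, Finset.mem_union, Finset.mem_biUnion, Finset.mem_sdiff,
        Finset.mem_inter]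
      constructor
      · rintro ⟨k, hk, hu⟩
        by_cases h : k ∈ ({i, j} : Finset (Fin n))
        · exact Or.inr ⟨k, ⟨hk, h⟩, hu⟩
        · exact Or.inl ⟨k, ⟨hk, h⟩, hu⟩
      · rintro (⟨k, hk, hu⟩ | ⟨k, hk, hu⟩) <;> exact ⟨k, hk.1, hu⟩
    have hdisj : Disjoint (s'.biUnion B) (s₂.biUnion B) := by
      rw [Finset.disjoint_left]
      intro u hu hu2
      rw [hcongr, Finset.mem_sdiff] at hu
      rw [Finset.mem_biUnion] at hu2
      obtain ⟨k, hk, hu2⟩ := hu2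
      rw [hs₂, Finset.mem_inter, Finset.mem_insert, Finset.mem_singleton] at hk
      apply hu.2
      rcases hk.2 with h | h
      · rw [h] at hu2
        have : B i = {x} := by simp [hB]
        rw [this, Finset.mem_singleton] at hu2
        simp [hu2]
      · rw [h] at hu2
        have : B j = {y} := by simp [hB, Ne.symm hij]
        rw [this, Finset.mem_singleton] at hu2
        simp [hu2]
    have hs2card : s₂.card ≤ (s₂.biUnion B).card := by
      by_cases hi' : i ∈ s <;> by_cases hj' : j ∈ s
      · have : s₂ = {i, j} := by
          ext k; simp only [hs₂, Finset.mem_inter, Finset.mem_insert, Finset.mem_singleton]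
          constructor
          · tauto
          · rintro (h | h) <;> subst h <;> simp [hi', hj']
        rw [this]
        have hbi : ({i, j} : Finset (Fin n)).biUnion B = {x, y} := by
          rw [Finset.biUnion_insert, Finset.singleton_biUnion]
          have e1 : B i = {x} := by simp [hB]
          have e2 : B j = {y} := by simp [hB, Ne.symm hij]
          rw [e1, e2]
          ext u; simp
        rw [hbi, Finset.card_insert_of_notMem (by simp [hij]),
          Finset.card_insert_of_notMem (by simp [hxyne])]
        simp
      · have : s₂ = {i} := by
          ext k; simp only [hs₂, Finset.mem_inter, Finset.mem_insert, Finset.mem_singleton]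
          constructor
          · rintro ⟨h1, h2 | h2⟩
            · exact h2
            · exact absurd (h2 ▸ h1) hj'
          · rintro h; subst h; simp [hi']
        rw [this, Finset.singleton_biUnion, show B i = {x} by simp [hB]]
        simp
      · have : s₂ = {j} := by
          ext k; simp only [hs₂, Finset.mem_inter, Finset.mem_insert, Finset.mem_singleton]
          constructor
          · rintro ⟨h1, h2 | h2⟩
            · exact absurd (h2 ▸ h1) hi'
            · exact h2
          · rintro h; subst h; simp [hj']
        rw [this, Finset.singleton_biUnion, show B j = {y} by simp [hB, Ne.symm hij]]
        simp
      · have : s₂ = ∅ := by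
          ext k; simp only [hs₂, Finset.mem_inter, Finset.mem_insert, Finset.mem_singleton,
            Finset.notMem_empty, iff_false]
          rintro ⟨h1, h2 | h2⟩ <;> rw [h2] at h1 <;> tauto
        simp [this]
    have hscard : s.card ≤ s'.card + s₂.card := by
      have : s ⊆ s' ∪ s₂ := by
        intro k hk
        simp only [hs', hs₂, Finset.mem_union, Finset.mem_sdiff, Finset.mem_inter]
        by_cases h : k ∈ ({i, j} : Finset (Fin n)) <;> tauto
      calc s.card ≤ (s' ∪ s₂).card := Finset.card_le_card this
        _ ≤ s'.card + s₂.card := Finset.card_union_le _ _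
    rw [hcup, Finset.card_union_of_disjoint hdisj]
    omega
  obtain ⟨g, hginj, hgmem⟩ := (Finset.all_card_le_biUnion_card_iff_existsInjective' B).mp hall
  have hgi : g i = x := by
    have := hgmem i
    rw [show B i = {x} by simp [hB], Finset.mem_singleton] at this
    exact this
  have hgj : g j = y := by
    have := hgmem j
    rw [show B j = {y} by simp [hB, Ne.symm hij], Finset.mem_singleton] at this
    exact this
  have hgA : ∀ k, g k ∈ A k := by
    intro k
    have hm := hgmem k
    by_cases h1 : k = i
    · rw [h1] at hm ⊢
      rw [show B i = {x} by simp [hB], Finset.mem_singleton] at hm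
      rw [hm]; exact hi.1
    by_cases h2 : k = j
    · rw [h2] at hm ⊢
      rw [show B j = {y} by simp [hB, Ne.symm hij], Finset.mem_singleton] at hm
      rw [hm]; exact hj.1
    · rw [show B k = A k \ {x, y} by simp [hB, h1, h2], Finset.mem_sdiff] at hm
      exact hm.1
  have hgT : g ∈ (Fintype.piFinset A).filter Function.Injective := by
    rw [Finset.mem_filter, Fintype.mem_piFinset]
    exact ⟨hgA, hginj⟩
  -- the injection
  set A' := swapFam A x y with hA'
  have hA'mem : ∀ k u, u ∈ A' k ↔
      (if x ∈ A k ∧ y ∉ A k then u = y ∨ (u ∈ A k ∧ u ≠ x) else u ∈ A k) := by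
    intro k u
    rw [hA']
    unfold swapFam
    split_ifs with h
    · simp [Finset.mem_insert, Finset.mem_sdiff]
    · rfl
  set P : (Fin n → ℕ) → Prop := fun f => ∃ k, (x ∈ A k ∧ y ∉ A k) ∧ f k = y with hP
  set φ : (Fin n → ℕ) → (Fin n → ℕ) :=
    fun f => if P f then (⇑(Equiv.swap x y)) ∘ f else f with hφ
  set S' := (Fintype.piFinset A').filter Function.Injective with hS'
  set T := (Fintype.piFinset A).filter Function.Injective with hT
  have hφmem : ∀ f ∈ S', φ f ∈ T := by
    intro f hf
    rw [hS', Finset.mem_filter, Fintype.mem_piFinset] at hf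
    obtain ⟨hfm, hfinj⟩ := hf
    rw [hT, Finset.mem_filter, Fintype.mem_piFinset]
    by_cases hPf : P f
    · obtain ⟨k₀, hk₀, hfk₀⟩ := hPf
      rw [hφ]
      simp only [if_pos (show P f from ⟨k₀, hk₀, hfk₀⟩), Function.comp_apply]
      refine ⟨fun k => ?_, (Equiv.swap x y).injective.comp hfinj⟩
      show (Equiv.swap x y) (f k) ∈ A k
      by_cases h1 : f k = y
      · have hkk : k = k₀ := hfinj (h1.trans hfk₀.symm)
        rw [h1, Equiv.swap_apply_right, hkk]
        exact hk₀.1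
      by_cases h2 : f k = x
      · rw [h2, Equiv.swap_apply_left]
        have hm := (hA'mem k (f k)).mp (hfm k)
        split_ifs at hm with hc
        · rcases hm with h | h
          · exact absurd h h1
          · exact absurd h2 h.2
        · push_neg at hc
          rw [h2] at hm
          exact hc hm
      · rw [Equiv.swap_apply_of_ne_of_ne h2 h1]
        have hm := (hA'mem k (f k)).mp (hfm k)
        split_ifs at hm with hc
        · rcases hm with h | h
          · exact absurd h h1
          · exact h.1
        · exact hm
    · rw [hφ]
      simp only [if_neg hPf]
      refine ⟨fun k => ?_, hfinj⟩
      have hm := (hA'mem k (f k)).mp (hfm k)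
      split_ifs at hm with hc
      · rcases hm with h | h
        · exact absurd ⟨k, hc, h⟩ hPf
        · exact h.1
      · exact hm
  have hPiff : ∀ f ∈ S', (P f ↔ ∃ k, (x ∈ A k ∧ y ∉ A k) ∧ φ f k = x) := by
    intro f hf
    constructor
    · rintro ⟨k₀, hk₀, hfk₀⟩
      refine ⟨k₀, hk₀, ?_⟩
      rw [hφ]
      simp only [if_pos (show P f from ⟨k₀, hk₀, hfk₀⟩), Function.comp_apply, hfk₀,
        Equiv.swap_apply_right]
    · rintro ⟨k₀, hk₀, hφk⟩
      by_contra hPf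
      rw [hφ] at hφk
      simp only [if_neg hPf] at hφk
      rw [hS', Finset.mem_filter, Fintype.mem_piFinset] at hf
      have hm := (hA'mem k₀ (f k₀)).mp (hf.1 k₀)
      rw [if_pos hk₀, hφk] at hm
      rcases hm with h | h
      · exact hxyne h
      · exact h.2 rfl
  have hinj : Set.InjOn φ S' := by
    intro f₁ h₁ f₂ h₂ heq
    have hP12 : P f₁ ↔ P f₂ := by
      rw [hPiff f₁ h₁, hPiff f₂ h₂, heq]
    by_cases hPf : P f₁
    · have hP2 := hP12.mp hPf
      have e : (⇑(Equiv.swap x y)) ∘ f₁ = (⇑(Equiv.swap x y)) ∘ f₂ := by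
        rw [hφ] at heq
        simpa only [if_pos hPf, if_pos hP2] using heq
      funext k
      exact (Equiv.swap x y).injective (congrFun e k)
    · have hP2 : ¬ P f₂ := fun h => hPf (hP12.mpr h)
      rw [hφ] at heq
      simpa only [if_neg hPf, if_neg hP2] using heq
  have hne : ∀ f ∈ S', φ f ≠ g := by
    intro f hf heq
    have hfm : ∀ k, f k ∈ A' k := by
      rw [hS', Finset.mem_filter, Fintype.mem_piFinset] at hf
      exact hf.1
    by_cases hPf : P f
    · have h1 : Equiv.swap x y (f j) = y := by
        have := congrFun heq j
        rw [hφ] at this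
        simpa only [if_pos hPf, Function.comp_apply, hgj] using this
      have h2 : f j = x := by
        apply (Equiv.swap x y).injective
        rw [h1, Equiv.swap_apply_left]
      have hm := (hA'mem j (f j)).mp (hfm j)
      rw [if_neg (fun h => hj.2 h.1), h2] at hm
      exact hj.2 hm
    · have h1 : f i = x := by
        have := congrFun heq i
        rw [hφ] at this
        simpa only [if_neg hPf, hgi] using this
      have hm := (hA'mem i (f i)).mp (hfm i)
      rw [if_pos ⟨hi.1, hi.2⟩, h1] at hm
      rcases hm with h | h
      · exact hxyne h
      · exact h.2 rfl
  have hcard1 : S'.card ≤ (T.erase g).card :=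
    Finset.card_le_card_of_injOn φ
      (fun f hf => Finset.mem_erase.mpr ⟨hne f hf, hφmem f hf⟩) hinj
  have hcard2 : (T.erase g).card < T.card := Finset.card_erase_lt_of_mem hgT
  show S'.card < T.card
  omega
end

section
/- For t ≥ 2, a valued (t,n)-family F with valuation (a_1,...,a_n) achieving the minimum number of SDRs among all such families contains no unsaturated exclusive pair. -/
open Finset

lemma swap_mem_P {n : ℕ} {A : Fin n → Finset ℕ} {x y : ℕ} {k : Fin n}
    (hP : x ∈ A k ∧ y ∉ A k) {z : ℕ} :
    z ∈ swapFam A x y k ↔ z = y ∨ (z ∈ A k ∧ z ≠ x) := by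
  simp [swapFam, hP]

lemma swap_eq_nP {n : ℕ} {A : Fin n → Finset ℕ} {x y : ℕ} {k : Fin n}
    (hP : ¬(x ∈ A k ∧ y ∉ A k)) : swapFam A x y k = A k := if_neg hP

lemma valued_hall_margin {t n : ℕ} {a : Fin n → ℕ} {A : Fin n → Finset ℕ}
    (hF : IsValuedTN t a A) (s : Finset (Fin n)) (hs : s.Nonempty) :
    s.card + t ≤ (s.biUnion A).card := by
  obtain ⟨hpos, hcard, hun⟩ := hF
  rcases lt_or_ge s.card 2 with h2 | h2
  · have hcs : s.card = 1 := by
      have := Finset.card_pos.mpr hs; omega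
    obtain ⟨j, hj⟩ := Finset.card_eq_one.mp hcs
    subst hj
    rw [Finset.singleton_biUnion, hcard j]
    have := hpos j
    simp only [Finset.card_singleton]
    omega
  · have h1 := hun s h2
    have h2' : s.card ≤ ∑ i ∈ s, a i := by
      calc s.card = ∑ _i ∈ s, 1 := by simp
      _ ≤ ∑ i ∈ s, a i := Finset.sum_le_sum (fun i _ => hpos i)
    omega

lemma biUnion_union' {n : ℕ} (s t : Finset (Fin n)) (B : Fin n → Finset ℕ) :
    (s ∪ t).biUnion B = s.biUnion B ∪ t.biUnion B := by
  ext z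
  simp only [Finset.mem_biUnion, Finset.mem_union]
  constructor
  · rintro ⟨k, hk | hk, hz⟩
    · exact Or.inl ⟨k, hk, hz⟩
    · exact Or.inr ⟨k, hk, hz⟩
  · rintro (⟨k, hk, hz⟩ | ⟨k, hk, hz⟩)
    · exact ⟨k, Or.inl hk, hz⟩
    · exact ⟨k, Or.inr hk, hz⟩

lemma exists_sdr_fixed {t n : ℕ} {A : Fin n → Finset ℕ} (ht : 2 ≤ t)
    (hall : ∀ s : Finset (Fin n), s.Nonempty → s.card + t ≤ (s.biUnion A).card)
    {x y : ℕ} {i₀ j₀ : Fin n} (hij : i₀ ≠ j₀) (hxy : x ≠ y)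
    (hx : x ∈ A i₀) (hy : y ∈ A j₀) :
    ∃ g : Fin n → ℕ, Function.Injective g ∧ (∀ k, g k ∈ A k) ∧ g i₀ = x ∧ g j₀ = y := by
  classical
  set B : Fin n → Finset ℕ :=
    fun k => if k = i₀ then {x} else if k = j₀ then {y} else A k \ {x, y} with hB
  have hBi : B i₀ = {x} := by simp [hB]
  have hBj : B j₀ = {y} := by simp [hB, (Ne.symm hij : j₀ ≠ i₀)]
  have hBk : ∀ k, k ≠ i₀ → k ≠ j₀ → B k = A k \ {x, y} := by
    intro k h1 h2; simp [hB, h1, h2]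
  have hBsub : ∀ k, B k ⊆ A k := by
    intro k
    by_cases h1 : k = i₀
    · subst h1; rw [hBi]; simp [hx]
    · by_cases h2 : k = j₀
      · subst h2; rw [hBj]; simp [hy]
      · rw [hBk k h1 h2]; exact Finset.sdiff_subset
  have hhall : ∀ s : Finset (Fin n), s.card ≤ (s.biUnion B).card := by
    intro s
    have hsplit := Finset.card_sdiff_add_card_inter s ({i₀, j₀} : Finset (Fin n))
    set s' := s \ ({i₀, j₀} : Finset (Fin n)) with hs'
    have hmemns' : ∀ k ∈ s', k ≠ i₀ ∧ k ≠ j₀ := by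
      intro k hk
      rw [hs', Finset.mem_sdiff, Finset.mem_insert, Finset.mem_singleton] at hk
      exact ⟨fun h => hk.2 (Or.inl h), fun h => hk.2 (Or.inr h)⟩
    have hpart2 : (s ∩ ({i₀, j₀} : Finset (Fin n))).card ≤
        ((s ∩ ({i₀, j₀} : Finset (Fin n))).biUnion B).card := by
      apply Finset.card_le_card_of_injOn (fun k => if k = i₀ then x else y)
      · intro k hk
        refine Finset.mem_biUnion.mpr ⟨k, hk, ?_⟩
        rw [Finset.mem_coe, Finset.mem_inter, Finset.mem_insert, Finset.mem_singleton] at hk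
        by_cases hk1 : k = i₀
        · subst hk1; rw [hBi]; simp
        · have hk2 : k = j₀ := hk.2.resolve_left hk1
          subst hk2; rw [hBj]; simp [hk1]
      · intro k₁ h₁ k₂ h₂ h
        dsimp only at h
        simp only [Finset.coe_inter, Set.mem_inter_iff, Finset.mem_coe,
          Finset.mem_insert, Finset.mem_singleton] at h₁ h₂
        by_cases e1 : k₁ = i₀ <;> by_cases e2 : k₂ = i₀
        · rw [e1, e2]
        · rw [if_pos e1, if_neg e2] at h; exact absurd h hxy
        · rw [if_neg e1, if_pos e2] at h; exact absurd h.symm hxy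
        · rw [(h₁.2.resolve_left e1), (h₂.2.resolve_left e2)]
    have hpart1 : s'.card ≤ (s'.biUnion B).card := by
      rcases s'.eq_empty_or_nonempty with he | hne
      · simp [he]
      · have hsubB : (s'.biUnion A) \ {x, y} ⊆ s'.biUnion B := by
          intro z hz
          rw [Finset.mem_sdiff, Finset.mem_biUnion] at hz
          obtain ⟨⟨k, hk, hzk⟩, hzxy⟩ := hz
          refine Finset.mem_biUnion.mpr ⟨k, hk, ?_⟩
          rw [hBk k (hmemns' k hk).1 (hmemns' k hk).2, Finset.mem_sdiff]
          exact ⟨hzk, hzxy⟩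
        have h1 := hall s' hne
        have h2 : (s'.biUnion A).card ≤ ((s'.biUnion A) \ ({x, y} : Finset ℕ)).card
            + ({x, y} : Finset ℕ).card := Finset.card_le_card_sdiff_add_card
        have h3 : ({x, y} : Finset ℕ).card ≤ 2 := Finset.card_insert_le _ _ |>.trans (by simp)
        have h4 := Finset.card_le_card hsubB
        omega
    have hdis : Disjoint (s'.biUnion B) ((s ∩ ({i₀, j₀} : Finset (Fin n))).biUnion B) := by
      rw [Finset.disjoint_left]
      intro z hz1 hz2
      rw [Finset.mem_biUnion] at hz1 hz2
      obtain ⟨k, hk, hzk⟩ := hz1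
      obtain ⟨k', hk', hzk'⟩ := hz2
      rw [hBk k (hmemns' k hk).1 (hmemns' k hk).2, Finset.mem_sdiff] at hzk
      apply hzk.2
      rw [Finset.mem_inter, Finset.mem_insert, Finset.mem_singleton] at hk'
      rcases hk'.2 with rfl | rfl
      · rw [hBi, Finset.mem_singleton] at hzk'; simp [hzk']
      · rw [hBj, Finset.mem_singleton] at hzk'; simp [hzk']
    have hunion : s.biUnion B = s'.biUnion B ∪ (s ∩ ({i₀, j₀} : Finset (Fin n))).biUnion B := by
      rw [← biUnion_union']
      congr 1
      exact (Finset.sdiff_union_inter s _).symm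
    rw [hunion, Finset.card_union_of_disjoint hdis]
    omega
  obtain ⟨g, hginj, hgmem⟩ := (Finset.all_card_le_biUnion_card_iff_exists_injective B).mp hhall
  have hgi : g i₀ = x := by have := hgmem i₀; rw [hBi, Finset.mem_singleton] at this; exact this
  have hgj : g j₀ = y := by have := hgmem j₀; rw [hBj, Finset.mem_singleton] at this; exact this
  exact ⟨g, hginj, fun k => hBsub k (hgmem k), hgi, hgj⟩

lemma swap_valued {t n : ℕ} {a : Fin n → ℕ} {A : Fin n → Finset ℕ}
    (hF : IsValuedTN t a A) {x y : ℕ} (hxy : x ≠ y)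
    (hns : ¬ Saturated t a A x y) : IsValuedTN t a (swapFam A x y) := by
  obtain ⟨hpos, hcard, hun⟩ := hF
  refine ⟨hpos, ?_, ?_⟩
  · intro i
    by_cases hP : x ∈ A i ∧ y ∉ A i
    · have h1 : (swapFam A x y) i = insert y (A i \ {x}) := if_pos hP
      have hyn : y ∉ A i \ {x} := fun h => hP.2 (Finset.mem_sdiff.mp h).1
      have hxs : ({x} : Finset ℕ) ⊆ A i := Finset.singleton_subset_iff.mpr hP.1
      rw [h1, Finset.card_insert_of_notMem hyn, Finset.card_sdiff_of_subset hxs, hcard i,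
        Finset.card_singleton]
      have := hpos i
      omega
    · rw [swap_eq_nP hP]; exact hcard i
  · intro I hI2
    by_cases hPI : ∃ i ∈ I, x ∈ A i ∧ y ∉ A i
    · obtain ⟨i₁, hi₁I, hPi₁⟩ := hPI
      have hxU : x ∈ I.biUnion A := Finset.mem_biUnion.mpr ⟨i₁, hi₁I, hPi₁.1⟩
      have hUpos : 0 < (I.biUnion A).card := Finset.card_pos.mpr ⟨x, hxU⟩
      have hsub : (I.biUnion A).erase x ⊆ I.biUnion (swapFam A x y) := by
        intro z hz
        rw [Finset.mem_erase] at hz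
        obtain ⟨hzx, hz⟩ := hz
        rw [Finset.mem_biUnion] at hz ⊢
        obtain ⟨k, hkI, hzk⟩ := hz
        refine ⟨k, hkI, ?_⟩
        by_cases hPk : x ∈ A k ∧ y ∉ A k
        · rw [swap_mem_P hPk]; exact Or.inr ⟨hzk, hzx⟩
        · rw [swap_eq_nP hPk]; exact hzk
      have hce : ((I.biUnion A).erase x).card = (I.biUnion A).card - 1 :=
        Finset.card_erase_of_mem hxU
      have hsum := hun I hI2
      by_cases hb1 : ∃ j ∈ I, x ∈ A j ∧ y ∈ A j
      · obtain ⟨j, hjI, hPj⟩ := hb1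
        have hsub2 : I.biUnion A ⊆ I.biUnion (swapFam A x y) := by
          intro z hz
          by_cases hzx : z = x
          · subst hzx
            refine Finset.mem_biUnion.mpr ⟨j, hjI, ?_⟩
            rw [swap_eq_nP (fun h => h.2 hPj.2)]
            exact hPj.1
          · exact hsub (Finset.mem_erase.mpr ⟨hzx, hz⟩)
        exact le_trans hsum (Finset.card_le_card hsub2)
      · have hyU' : y ∈ I.biUnion (swapFam A x y) :=
          Finset.mem_biUnion.mpr ⟨i₁, hi₁I, (swap_mem_P hPi₁).mpr (Or.inl rfl)⟩
        by_cases hyU : y ∈ I.biUnion A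
        · obtain ⟨j₁, hj₁I, hyj₁⟩ := Finset.mem_biUnion.mp hyU
          have hxj₁ : x ∉ A j₁ := fun hxx => hb1 ⟨j₁, hj₁I, hxx, hyj₁⟩
          have hne : (I.biUnion A).card ≠ (∑ i ∈ I, a i) + t := by
            intro hEq
            apply hns
            refine ⟨I, ?_, ⟨i₁, ?_⟩, ⟨j₁, ?_⟩, hEq⟩
            · ext k
              simp only [Finset.mem_inter, Ix, Finset.mem_filter, Finset.mem_univ, true_and,
                Finset.notMem_empty, iff_false, not_and]
              intro hk hyk
              exact hb1 ⟨k, hk.1, hk.2, hyk⟩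
            · simp only [Finset.mem_inter, Finset.mem_sdiff, Ix, Finset.mem_filter,
                Finset.mem_univ, true_and]
              exact ⟨hi₁I, hPi₁.1, hPi₁.2⟩
            · simp only [Finset.mem_inter, Finset.mem_sdiff, Ix, Finset.mem_filter,
                Finset.mem_univ, true_and]
              exact ⟨hj₁I, hyj₁, hxj₁⟩
          have hle := Finset.card_le_card hsub
          omega
        · have hyne : y ∉ (I.biUnion A).erase x := fun h => hyU (Finset.mem_erase.mp h).2
          have hsub3 : insert y ((I.biUnion A).erase x) ⊆ I.biUnion (swapFam A x y) := by
            intro z hz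
            rcases Finset.mem_insert.mp hz with rfl | hz
            · exact hyU'
            · exact hsub hz
          have hci := Finset.card_insert_of_notMem hyne
          have hle := Finset.card_le_card hsub3
          omega
    · have heq : I.biUnion (swapFam A x y) = I.biUnion A :=
        Finset.biUnion_congr rfl (fun k hk => swap_eq_nP (fun h => hPI ⟨k, hk, h⟩))
      rw [heq]
      exact hun I hI2

def phiMap {n : ℕ} (A : Fin n → Finset ℕ) (x y : ℕ) (f : Fin n → ℕ) : Fin n → ℕ := fun k =>
  if (x ∈ A k ∧ y ∉ A k) ∧ f k = y then x
  else if f k = x ∧ ∃ i, (x ∈ A i ∧ y ∉ A i) ∧ f i = y then y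
  else f k

def psiMap {n : ℕ} (A : Fin n → Finset ℕ) (x y : ℕ) (g : Fin n → ℕ) : Fin n → ℕ := fun k =>
  if (x ∈ A k ∧ y ∉ A k) ∧ g k = x then y
  else if g k = y ∧ ∃ i, (x ∈ A i ∧ y ∉ A i) ∧ g i = x then x
  else g k

lemma phi_form {n : ℕ} {A : Fin n → Finset ℕ} {x y : ℕ} (hxy : x ≠ y)
    {f : Fin n → ℕ} (hinj : Function.Injective f) :
    ((¬∃ i, (x ∈ A i ∧ y ∉ A i) ∧ f i = y) ∧ phiMap A x y f = f) ∨
    (∃ i₁, ((x ∈ A i₁ ∧ y ∉ A i₁) ∧ f i₁ = y) ∧ (¬∃ j, f j = x) ∧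
      phiMap A x y f = Function.update f i₁ x) ∨
    (∃ i₁ j₁, ((x ∈ A i₁ ∧ y ∉ A i₁) ∧ f i₁ = y) ∧ f j₁ = x ∧
      phiMap A x y f = f ∘ (Equiv.swap i₁ j₁)) := by
  by_cases hE : ∃ i, (x ∈ A i ∧ y ∉ A i) ∧ f i = y
  · obtain ⟨i₁, hPi₁, hfi₁⟩ := hE
    by_cases hFx : ∃ j, f j = x
    · obtain ⟨j₁, hfj₁⟩ := hFx
      right; right
      refine ⟨i₁, j₁, ⟨hPi₁, hfi₁⟩, hfj₁, ?_⟩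
      funext k
      simp only [phiMap, Function.comp]
      by_cases hk1 : k = i₁
      · subst hk1
        rw [if_pos ⟨hPi₁, hfi₁⟩, Equiv.swap_apply_left, hfj₁]
      · by_cases hk2 : k = j₁
        · subst hk2
          have h1 : ¬((x ∈ A k ∧ y ∉ A k) ∧ f k = y) := by
            rintro ⟨-, hc⟩; exact hxy (hfj₁.symm.trans hc)
          have h2 : f k = x ∧ ∃ i, (x ∈ A i ∧ y ∉ A i) ∧ f i = y :=
            ⟨hfj₁, ⟨i₁, hPi₁, hfi₁⟩⟩
          rw [if_neg h1, if_pos h2, Equiv.swap_apply_right, hfi₁]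
        · have h1 : ¬((x ∈ A k ∧ y ∉ A k) ∧ f k = y) := by
            rintro ⟨-, hc⟩; exact hk1 (hinj (hc.trans hfi₁.symm))
          have h2 : ¬(f k = x ∧ ∃ i, (x ∈ A i ∧ y ∉ A i) ∧ f i = y) := by
            rintro ⟨hc, -⟩; exact hk2 (hinj (hc.trans hfj₁.symm))
          rw [if_neg h1, if_neg h2, Equiv.swap_apply_of_ne_of_ne hk1 hk2]
    · right; left
      refine ⟨i₁, ⟨hPi₁, hfi₁⟩, hFx, ?_⟩
      funext k
      simp only [phiMap]
      by_cases hk1 : k = i₁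
      · subst hk1
        rw [if_pos ⟨hPi₁, hfi₁⟩, Function.update_self]
      · have h1 : ¬((x ∈ A k ∧ y ∉ A k) ∧ f k = y) := by
          rintro ⟨-, hc⟩; exact hk1 (hinj (hc.trans hfi₁.symm))
        have h2 : ¬(f k = x ∧ ∃ i, (x ∈ A i ∧ y ∉ A i) ∧ f i = y) := by
          rintro ⟨hc, -⟩; exact hFx ⟨k, hc⟩
        rw [if_neg h1, if_neg h2, Function.update_of_ne hk1]
  · left
    refine ⟨hE, ?_⟩
    funext k
    simp only [phiMap]
    have h1 : ¬((x ∈ A k ∧ y ∉ A k) ∧ f k = y) := fun h => hE ⟨k, h⟩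
    have h2 : ¬(f k = x ∧ ∃ i, (x ∈ A i ∧ y ∉ A i) ∧ f i = y) := fun h => hE h.2
    rw [if_neg h1, if_neg h2]

lemma swap_numSDR_lt {n : ℕ} {A : Fin n → Finset ℕ} {x y : ℕ} (hxy : x ≠ y)
    {i₀ j₀ : Fin n} (hPi₀ : x ∈ A i₀ ∧ y ∉ A i₀) (hQj₀ : y ∈ A j₀ ∧ x ∉ A j₀)
    {g₀ : Fin n → ℕ} (hg₀inj : Function.Injective g₀) (hg₀mem : ∀ k, g₀ k ∈ A k)
    (hg₀i : g₀ i₀ = x) (hg₀j : g₀ j₀ = y) :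
    numSDR (swapFam A x y) < numSDR A := by
  classical
  set S : Finset (Fin n → ℕ) := (Fintype.piFinset A).filter Function.Injective with hS
  set S' : Finset (Fin n → ℕ) :=
    (Fintype.piFinset (swapFam A x y)).filter Function.Injective with hS'
  have hmain : ∀ f : Fin n → ℕ, Function.Injective f → (∀ k, f k ∈ swapFam A x y k) →
      (∀ k, phiMap A x y f k ∈ A k) ∧ Function.Injective (phiMap A x y f) ∧
      psiMap A x y (phiMap A x y f) = f ∧ phiMap A x y f ≠ g₀ := by
    intro f hinj hmem
    have hPfx : ∀ k, (x ∈ A k ∧ y ∉ A k) → f k ≠ x := by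
      intro k hP h
      rcases (swap_mem_P hP).mp (hmem k) with hc | hc
      · exact hxy (h.symm.trans hc)
      · exact hc.2 h
    have hfA : ∀ k, f k ≠ y → f k ∈ A k := by
      intro k hky
      by_cases hP : x ∈ A k ∧ y ∉ A k
      · rcases (swap_mem_P hP).mp (hmem k) with hc | hc
        · exact absurd hc hky
        · exact hc.1
      · have := hmem k
        rwa [swap_eq_nP hP] at this
    have hfxy : ∀ k, f k = x → x ∈ A k ∧ y ∈ A k := by
      intro k h
      by_cases hP : x ∈ A k ∧ y ∉ A k
      · exact absurd h (hPfx k hP)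
      · have hx : x ∈ A k := by
          have := hmem k
          rw [swap_eq_nP hP] at this
          exact h ▸ this
        refine ⟨hx, ?_⟩
        by_contra hny
        exact hP ⟨hx, hny⟩
    rcases phi_form hxy hinj with ⟨hE, hphi⟩ | ⟨i₁, ⟨hPi₁, hfi₁⟩, hFx, hphi⟩ |
        ⟨i₁, j₁, ⟨hPi₁, hfi₁⟩, hfj₁, hphi⟩ <;> rw [hphi]
    · -- phi = f
      refine ⟨?_, hinj, ?_, ?_⟩
      · intro k
        by_cases hky : f k = y
        · have hP : ¬(x ∈ A k ∧ y ∉ A k) := fun hP => hE ⟨k, hP, hky⟩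
          have := hmem k
          rwa [swap_eq_nP hP] at this
        · exact hfA k hky
      · funext k
        simp only [psiMap]
        have h1 : ¬((x ∈ A k ∧ y ∉ A k) ∧ f k = x) := fun h => hPfx k h.1 h.2
        have h2 : ¬(f k = y ∧ ∃ i, (x ∈ A i ∧ y ∉ A i) ∧ f i = x) := by
          rintro ⟨-, i, hPi, hfi⟩; exact hPfx i hPi hfi
        rw [if_neg h1, if_neg h2]
      · intro h
        exact hPfx i₀ hPi₀ (by rw [h]; exact hg₀i)
    · -- phi = update f i₁ x
      refine ⟨?_, ?_, ?_, ?_⟩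
      · intro k
        by_cases hk : k = i₁
        · subst hk; rw [Function.update_self]; exact hPi₁.1
        · rw [Function.update_of_ne hk]
          exact hfA k (fun hc => hk (hinj (hc.trans hfi₁.symm)))
      · intro k₁ k₂ h
        by_cases e1 : k₁ = i₁ <;> by_cases e2 : k₂ = i₁
        · rw [e1, e2]
        · subst e1
          rw [Function.update_self, Function.update_of_ne e2] at h
          exact absurd ⟨k₂, h.symm⟩ hFx
        · subst e2
          rw [Function.update_self, Function.update_of_ne e1] at h
          exact absurd ⟨k₁, h⟩ hFx
        · rw [Function.update_of_ne e1, Function.update_of_ne e2] at h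
          exact hinj h
      · funext k
        simp only [psiMap]
        by_cases hk : k = i₁
        · subst hk
          rw [if_pos ⟨hPi₁, Function.update_self _ _ _⟩, hfi₁]
        · rw [Function.update_of_ne hk]
          have h1 : ¬((x ∈ A k ∧ y ∉ A k) ∧ f k = x) := fun h => hPfx k h.1 h.2
          have h2 : ¬(f k = y ∧ ∃ i, (x ∈ A i ∧ y ∉ A i) ∧
              Function.update f i₁ x i = x) := by
            rintro ⟨hc, -⟩; exact hk (hinj (hc.trans hfi₁.symm))
          rw [if_neg h1, if_neg h2]
      · intro h
        have hval : Function.update f i₁ x j₀ = y := by rw [h]; exact hg₀j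
        by_cases hj : j₀ = i₁
        · subst hj
          rw [Function.update_self] at hval
          exact hxy hval
        · rw [Function.update_of_ne hj] at hval
          exact hj (hinj (hval.trans hfi₁.symm))
    · -- phi = f ∘ swap i₁ j₁
      have hxAj₁ := hfxy j₁ hfj₁
      refine ⟨?_, hinj.comp (Equiv.swap i₁ j₁).injective, ?_, ?_⟩
      · intro k
        simp only [Function.comp]
        by_cases hk1 : k = i₁
        · subst hk1
          rw [Equiv.swap_apply_left, hfj₁]
          exact hPi₁.1
        · by_cases hk2 : k = j₁
          · subst hk2
            rw [Equiv.swap_apply_right, hfi₁]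
            exact hxAj₁.2
          · rw [Equiv.swap_apply_of_ne_of_ne hk1 hk2]
            exact hfA k (fun hc => hk1 (hinj (hc.trans hfi₁.symm)))
      · funext k
        simp only [psiMap, Function.comp]
        by_cases hk1 : k = i₁
        · subst hk1
          rw [Equiv.swap_apply_left, if_pos ⟨hPi₁, hfj₁⟩, hfi₁]
        · by_cases hk2 : k = j₁
          · subst hk2
            rw [Equiv.swap_apply_right]
            have h1 : ¬((x ∈ A k ∧ y ∉ A k) ∧ f i₁ = x) := by
              rintro ⟨hc, -⟩; exact hc.2 hxAj₁.2
            have h2 : f i₁ = y ∧ ∃ i, (x ∈ A i ∧ y ∉ A i) ∧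
                f (Equiv.swap i₁ k i) = x :=
              ⟨hfi₁, ⟨i₁, hPi₁, by rw [Equiv.swap_apply_left]; exact hfj₁⟩⟩
            rw [if_neg h1, if_pos h2, hfj₁]
          · rw [Equiv.swap_apply_of_ne_of_ne hk1 hk2]
            have h1 : ¬((x ∈ A k ∧ y ∉ A k) ∧ f k = x) := fun h => hPfx k h.1 h.2
            have h2 : ¬(f k = y ∧ ∃ i, (x ∈ A i ∧ y ∉ A i) ∧
                f (Equiv.swap i₁ j₁ i) = x) := by
              rintro ⟨hc, -⟩; exact hk1 (hinj (hc.trans hfi₁.symm))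
            rw [if_neg h1, if_neg h2]
      · intro h
        have hval : f (Equiv.swap i₁ j₁ j₀) = y := by
          have := congrFun h j₀
          simp only [Function.comp] at this
          rw [this]; exact hg₀j
        have hsw : Equiv.swap i₁ j₁ j₀ = i₁ := hinj (hval.trans hfi₁.symm)
        have hj : j₀ = j₁ := by
          have h2 := congrArg (Equiv.swap i₁ j₁) hsw
          rwa [Equiv.swap_apply_self, Equiv.swap_apply_left] at h2
        exact hQj₀.2 (hj ▸ hxAj₁.1)
  have hg₀S : g₀ ∈ S := by
    rw [hS, Finset.mem_filter]
    exact ⟨Fintype.mem_piFinset.mpr hg₀mem, hg₀inj⟩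
  have hmem' : ∀ f ∈ S', Function.Injective f ∧ ∀ k, f k ∈ swapFam A x y k := by
    intro f hf
    rw [hS', Finset.mem_filter, Fintype.mem_piFinset] at hf
    exact ⟨hf.2, hf.1⟩
  have hinjOn : Set.InjOn (phiMap A x y) ↑S' := by
    intro f hf f' hf' h
    obtain ⟨hfi, hfm⟩ := hmem' f (by exact_mod_cast hf)
    obtain ⟨hfi', hfm'⟩ := hmem' f' (by exact_mod_cast hf')
    have e1 := (hmain f hfi hfm).2.2.1
    have e2 := (hmain f' hfi' hfm').2.2.1
    rw [← e1, ← e2, h]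
  have himg : S'.image (phiMap A x y) ⊆ S.erase g₀ := by
    intro g hg
    obtain ⟨f, hf, rfl⟩ := Finset.mem_image.mp hg
    obtain ⟨hfi, hfm⟩ := hmem' f hf
    obtain ⟨hm1, hm2, -, hm4⟩ := hmain f hfi hfm
    refine Finset.mem_erase.mpr ⟨hm4, ?_⟩
    rw [hS, Finset.mem_filter]
    exact ⟨Fintype.mem_piFinset.mpr hm1, hm2⟩
  have : numSDR (swapFam A x y) = S'.card := rfl
  rw [this]
  have : numSDR A = S.card := rfl
  rw [this]
  calc S'.card = (S'.image (phiMap A x y)).card := (Finset.card_image_of_injOn hinjOn).symm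
    _ ≤ (S.erase g₀).card := Finset.card_le_card himg
    _ < S.card := Finset.card_erase_lt_of_mem hg₀S

theorem minimal_no_unsaturated (t n : ℕ) (ht : 2 ≤ t) (a : Fin n → ℕ)
    (A : Fin n → Finset ℕ) (hF : IsValuedTN t a A)
    (hmin : ∀ B : Fin n → Finset ℕ, IsValuedTN t a B → numSDR A ≤ numSDR B) :
    ∀ x y : ℕ, Exclusive A x y → Saturated t a A x y := by
  intro x y hex
  by_contra hns
  obtain ⟨⟨i₀, hi₀⟩, ⟨j₀, hj₀⟩⟩ := hex
  rw [Finset.mem_sdiff] at hi₀ hj₀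
  simp only [Ix, Finset.mem_filter, Finset.mem_univ, true_and, not_and] at hi₀ hj₀
  have hi₀' : x ∈ A i₀ ∧ y ∉ A i₀ := hi₀
  have hj₀' : y ∈ A j₀ ∧ x ∉ A j₀ := hj₀
  have hxy : x ≠ y := fun h => hi₀'.2 (h ▸ hi₀'.1)
  have hij : i₀ ≠ j₀ := fun h => hj₀'.2 (h ▸ hi₀'.1)
  have hall := valued_hall_margin hF
  obtain ⟨g₀, hg₀inj, hg₀mem, hg₀i, hg₀j⟩ :=
    exists_sdr_fixed ht hall hij hxy hi₀'.1 hj₀'.1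
  have h1 := hmin (swapFam A x y) (swap_valued hF hxy hns)
  have h2 := swap_numSDR_lt hxy hi₀' hj₀' hg₀inj hg₀mem hg₀i hg₀j
  omega
end

section
/- Let F be a valued (t,n)-family with valuation (a_1,...,a_n). Define the relation i ∼ j on {1,...,n} by: i ∼ j iff there exists I ⊆ {1,...,n} with {i,j} ⊆ I and |⋃_{s∈I} A_s| = ∑_{s∈I} a_s + t. Then ∼ is an equivalence relation. -/
open Finset

theorem sim_equivalence (t n : ℕ) (a : Fin n → ℕ) (A : Fin n → Finset ℕ)
    (hF : IsValuedTN t a A) :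
    Equivalence (fun i j : Fin n => ∃ I : Finset (Fin n),
      i ∈ I ∧ j ∈ I ∧ (I.biUnion A).card = (∑ s ∈ I, a s) + t) := by
  obtain ⟨hpos, hcard, hbig⟩ := hF
  have lower : ∀ I : Finset (Fin n), I.Nonempty → (∑ s ∈ I, a s) + t ≤ (I.biUnion A).card := by
    intro I hI
    rcases Nat.lt_or_ge I.card 2 with h | h
    · interval_cases h1 : I.card
      · simp [Finset.card_eq_zero.mp h1] at hI
      · obtain ⟨i, hi⟩ := Finset.card_eq_one.mp h1
        subst hi
        simp [hcard i]
    · exact hbig I h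
  constructor
  · intro i
    exact ⟨{i}, Finset.mem_singleton_self i, Finset.mem_singleton_self i, by simp [hcard i]⟩
  · rintro i j ⟨I, hi, hj, hI⟩
    exact ⟨I, hj, hi, hI⟩
  · rintro i j k ⟨I, hiI, hjI, hI⟩ ⟨J, hjJ, hkJ, hJ⟩
    refine ⟨I ∪ J, Finset.mem_union_left _ hiI, Finset.mem_union_right _ hkJ, ?_⟩
    have hsub : ((I ∪ J).biUnion A).card + ((I ∩ J).biUnion A).card
        ≤ (I.biUnion A).card + (J.biUnion A).card := by
      have h1 : (I ∪ J).biUnion A = I.biUnion A ∪ J.biUnion A := by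
        ext x; simp [Finset.mem_biUnion, Finset.mem_union, or_and_right, exists_or]
      have h2 : (I ∩ J).biUnion A ⊆ I.biUnion A ∩ J.biUnion A := by
        intro x hx
        obtain ⟨s, hs, hxs⟩ := Finset.mem_biUnion.mp hx
        exact Finset.mem_inter.mpr ⟨Finset.mem_biUnion.mpr ⟨s, (Finset.mem_inter.mp hs).1, hxs⟩,
          Finset.mem_biUnion.mpr ⟨s, (Finset.mem_inter.mp hs).2, hxs⟩⟩
      calc ((I ∪ J).biUnion A).card + ((I ∩ J).biUnion A).card
          ≤ (I.biUnion A ∪ J.biUnion A).card + (I.biUnion A ∩ J.biUnion A).card := by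
            rw [h1]; exact Nat.add_le_add_left (Finset.card_le_card h2) _
        _ = (I.biUnion A).card + (J.biUnion A).card := Finset.card_union_add_card_inter _ _
    have hle : ((I ∪ J).biUnion A).card ≤ (∑ s ∈ I ∪ J, a s) + t := by
      have hinter : (∑ s ∈ I ∩ J, a s) + t ≤ ((I ∩ J).biUnion A).card :=
        lower _ ⟨j, Finset.mem_inter.mpr ⟨hjI, hjJ⟩⟩
      have hsum : (∑ s ∈ I ∪ J, a s) + (∑ s ∈ I ∩ J, a s) = (∑ s ∈ I, a s) + ∑ s ∈ J, a s :=
        Finset.sum_union_inter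
      omega
    exact le_antisymm hle (lower _ ⟨i, Finset.mem_union_left _ hiI⟩)
end

section
/- Let F be a valued (t,n)-family with valuation (a_1,...,a_n). If I, J ⊆ {1,...,n} satisfy I ∩ J ≠ ∅, |⋃_{s∈I} A_s| = ∑_{s∈I} a_s + t and |⋃_{s∈J} A_s| = ∑_{s∈J} a_s + t, then |⋃_{s∈I∪J} A_s| = ∑_{s∈I∪J} a_s + t. -/
open Finset

theorem tight_union (t n : ℕ) (a : Fin n → ℕ) (A : Fin n → Finset ℕ)
    (hF : IsValuedTN t a A) (I J : Finset (Fin n)) (hIJ : (I ∩ J).Nonempty)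
    (hI : (I.biUnion A).card = (∑ s ∈ I, a s) + t)
    (hJ : (J.biUnion A).card = (∑ s ∈ J, a s) + t) :
    ((I ∪ J).biUnion A).card = (∑ s ∈ I ∪ J, a s) + t := by
  obtain ⟨hpos, hcard, hval⟩ := hF
  -- general lower bound for nonempty K
  have lb : ∀ K : Finset (Fin n), K.Nonempty → (∑ s ∈ K, a s) + t ≤ (K.biUnion A).card := by
    intro K hK
    rcases lt_or_ge K.card 2 with h2 | h2
    · obtain ⟨i, hi⟩ := hK
      have hK1 : K = {i} := by
        apply Finset.eq_singleton_iff_unique_mem.2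
        refine ⟨hi, fun j hj => ?_⟩
        by_contra hne
        have : 2 ≤ K.card := Finset.one_lt_card.2 ⟨j, hj, i, hi, hne⟩
        omega
      subst hK1
      simp [hcard i]
    · exact hval K h2
  have hlbU : (∑ s ∈ I ∪ J, a s) + t ≤ ((I ∪ J).biUnion A).card :=
    lb _ (hIJ.mono (Finset.inter_subset_left.trans Finset.subset_union_left))
  have hlbI : (∑ s ∈ I ∩ J, a s) + t ≤ ((I ∩ J).biUnion A).card := lb _ hIJ
  have hsub : (I ∩ J).biUnion A ⊆ I.biUnion A ∩ J.biUnion A := by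
    intro x hx
    rw [Finset.mem_biUnion] at hx
    obtain ⟨i, hi, hxi⟩ := hx
    rw [Finset.mem_inter] at hi ⊢
    exact ⟨Finset.mem_biUnion.2 ⟨i, hi.1, hxi⟩, Finset.mem_biUnion.2 ⟨i, hi.2, hxi⟩⟩
  have hunion : (I ∪ J).biUnion A = I.biUnion A ∪ J.biUnion A := by
    ext x; simp only [Finset.mem_biUnion, Finset.mem_union]
    constructor
    · rintro ⟨i, hi | hi, hx⟩
      exacts [Or.inl ⟨i, hi, hx⟩, Or.inr ⟨i, hi, hx⟩]
    · rintro (⟨i, hi, hx⟩ | ⟨i, hi, hx⟩)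
      exacts [⟨i, Or.inl hi, hx⟩, ⟨i, Or.inr hi, hx⟩]
  have hsum : (∑ s ∈ I ∪ J, a s) + (∑ s ∈ I ∩ J, a s) = (∑ s ∈ I, a s) + (∑ s ∈ J, a s) :=
    Finset.sum_union_inter
  have hcardsum : ((I ∪ J).biUnion A).card + ((I ∩ J).biUnion A).card
      ≤ (I.biUnion A).card + (J.biUnion A).card := by
    calc ((I ∪ J).biUnion A).card + ((I ∩ J).biUnion A).card
        ≤ (I.biUnion A ∪ J.biUnion A).card + (I.biUnion A ∩ J.biUnion A).card := by
          rw [hunion]; exact Nat.add_le_add_left (Finset.card_le_card hsub) _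
      _ = (I.biUnion A).card + (J.biUnion A).card := Finset.card_union_add_card_inter _ _
  omega
end

section
/- For any valued (t,n)-family F with valuation (a_1,...,a_n), the number of saturated exclusive pairs of F is at most ∑_{1 ≤ i < j ≤ n} a_i·a_j. -/
open Finset

namespace SatBound

open scoped Classical

variable {n : ℕ}

def ExactS (t : ℕ) (a : Fin n → ℕ) (A : Fin n → Finset ℕ) (S : Finset (Fin n)) : Prop :=
  S.Nonempty ∧ (S.biUnion A).card = (∑ i ∈ S, a i) + t

theorem lowerU (t : ℕ) (a : Fin n → ℕ) (A : Fin n → Finset ℕ) (hF : IsValuedTN t a A)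
    (S : Finset (Fin n)) (hS : S.Nonempty) :
    (∑ i ∈ S, a i) + t ≤ (S.biUnion A).card := by
  rcases Nat.lt_or_ge S.card 2 with h | h
  · have h0 : 0 < S.card := Finset.card_pos.mpr hS
    have h1 : S.card = 1 := by omega
    obtain ⟨i, rfl⟩ := Finset.card_eq_one.mp h1
    simp [Finset.singleton_biUnion, hF.2.1 i]
  · exact hF.2.2 S h

theorem exact_inter (t : ℕ) (a : Fin n → ℕ) (A : Fin n → Finset ℕ) (hF : IsValuedTN t a A)
    {I J : Finset (Fin n)} (hI : ExactS t a A I) (hJ : ExactS t a A J)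
    (hIJ : (I ∩ J).Nonempty) : ExactS t a A (I ∩ J) := by
  refine ⟨hIJ, ?_⟩
  have hUsub : ((I ∩ J).biUnion A) ⊆ (I.biUnion A) ∩ (J.biUnion A) := by
    intro x hx
    simp only [mem_biUnion, mem_inter] at *
    obtain ⟨k, hk, hxk⟩ := hx
    exact ⟨⟨k, hk.1, hxk⟩, ⟨k, hk.2, hxk⟩⟩
  have h1 : ((I ∩ J).biUnion A).card ≤ ((I.biUnion A) ∩ (J.biUnion A)).card :=
    card_le_card hUsub
  have h2 : ((I.biUnion A) ∪ (J.biUnion A)).card + ((I.biUnion A) ∩ (J.biUnion A)).card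
      = (I.biUnion A).card + (J.biUnion A).card := card_union_add_card_inter _ _
  have h3 : (I ∪ J).biUnion A = (I.biUnion A) ∪ (J.biUnion A) := by
    ext x
    simp only [mem_biUnion, mem_union]
    constructor
    · rintro ⟨k, hk | hk, hxk⟩
      · exact Or.inl ⟨k, hk, hxk⟩
      · exact Or.inr ⟨k, hk, hxk⟩
    · rintro (⟨k, hk, hxk⟩ | ⟨k, hk, hxk⟩)
      · exact ⟨k, Or.inl hk, hxk⟩
      · exact ⟨k, Or.inr hk, hxk⟩
  have h4 := lowerU t a A hF (I ∪ J) (hIJ.mono (by intro k hk; exact mem_union_left _ (mem_inter.mp hk).1))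
  rw [h3] at h4
  have h5 := lowerU t a A hF (I ∩ J) hIJ
  have h6 : (∑ i ∈ I ∪ J, a i) + (∑ i ∈ I ∩ J, a i) = (∑ i ∈ I, a i) + (∑ i ∈ J, a i) :=
    Finset.sum_union_inter
  have h7 := hI.2
  have h8 := hJ.2
  omega

theorem countTrace (t : ℕ) (a : Fin n → ℕ) (A : Fin n → Finset ℕ) (hF : IsValuedTN t a A)
    {I : Finset (Fin n)} (hI : ExactS t a A I) (S : Finset (Fin n)) (hSI : S ⊆ I)
    (hne : (I \ S).Nonempty) :
    ((I.biUnion A).filter (fun x => ∀ k ∈ I, x ∈ A k → k ∈ S)).card ≤ ∑ i ∈ S, a i := by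
  have hsub2 : (I \ S).biUnion A ⊆ I.biUnion A :=
    Finset.biUnion_subset_biUnion_of_subset_left A sdiff_subset
  have hdisj : ((I.biUnion A).filter (fun x => ∀ k ∈ I, x ∈ A k → k ∈ S))
      ⊆ (I.biUnion A) \ ((I \ S).biUnion A) := by
    intro x hx
    simp only [mem_filter] at hx
    rw [mem_sdiff]
    refine ⟨hx.1, ?_⟩
    intro hmem
    obtain ⟨k, hk, hxk⟩ := mem_biUnion.mp hmem
    exact (mem_sdiff.mp hk).2 (hx.2 k (mem_sdiff.mp hk).1 hxk)
  have h1 := card_le_card hdisj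
  have h2 : ((I.biUnion A) \ ((I \ S).biUnion A)).card
      = (I.biUnion A).card - ((I \ S).biUnion A).card := card_sdiff_of_subset hsub2
  have h3 := lowerU t a A hF (I \ S) hne
  have h4 : (∑ i ∈ I \ S, a i) + (∑ i ∈ S, a i) = ∑ i ∈ I, a i := Finset.sum_sdiff hSI
  have h5 := hI.2
  omega

/-- witness predicate -/
def Wit (t : ℕ) (a : Fin n → ℕ) (A : Fin n → Finset ℕ) (x y : ℕ) (I : Finset (Fin n)) : Prop :=
  I ∩ Ix A x ∩ Ix A y = ∅ ∧ (I ∩ (Ix A x \ Ix A y)).Nonempty ∧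
    (I ∩ (Ix A y \ Ix A x)).Nonempty ∧ (I.biUnion A).card = (∑ i ∈ I, a i) + t

theorem wit_exact {t : ℕ} {a : Fin n → ℕ} {A : Fin n → Finset ℕ} {x y : ℕ} {I : Finset (Fin n)}
    (h : Wit t a A x y I) : ExactS t a A I := by
  obtain ⟨i, hi⟩ := h.2.1
  exact ⟨⟨i, (mem_inter.mp hi).1⟩, h.2.2.2⟩

noncomputable def minWit (t : ℕ) (a : Fin n → ℕ) (A : Fin n → Finset ℕ) (x y : ℕ) :
    Finset (Fin n) :=
  if h : ∃ I, Wit t a A x y I ∧ ∀ J, Wit t a A x y J → I.card ≤ J.card then h.choose else ∅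

theorem minWit_spec {t : ℕ} {a : Fin n → ℕ} {A : Fin n → Finset ℕ} {x y : ℕ}
    (hs : Saturated t a A x y) :
    Wit t a A x y (minWit t a A x y) ∧
      ∀ J, Wit t a A x y J → (minWit t a A x y).card ≤ J.card := by
  obtain ⟨I0, hI0⟩ := hs
  have hI0' : Wit t a A x y I0 := hI0
  have hex : ∃ I, Wit t a A x y I ∧ ∀ J, Wit t a A x y J → I.card ≤ J.card := by
    obtain ⟨I, hImem, hImin⟩ := Finset.exists_min_image
      (Finset.univ.filter (fun I => Wit t a A x y I)) Finset.card
      ⟨I0, by simp [hI0']⟩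
    refine ⟨I, (mem_filter.mp hImem).2, fun J hJ => hImin J (by simp [hJ])⟩
  rw [minWit, dif_pos hex]
  exact hex.choose_spec

def IsMinEx (t : ℕ) (a : Fin n → ℕ) (A : Fin n → Finset ℕ) (I : Finset (Fin n)) (i j : Fin n) :
    Prop :=
  ExactS t a A I ∧ i ∈ I ∧ j ∈ I ∧ ∀ D, ExactS t a A D → i ∈ D → j ∈ D → I ⊆ D

theorem isMinEx_unique {t : ℕ} {a : Fin n → ℕ} {A : Fin n → Finset ℕ}
    {I I' : Finset (Fin n)} {i j : Fin n}
    (h : IsMinEx t a A I i j) (h' : IsMinEx t a A I' i j) : I = I' :=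
  subset_antisymm (h.2.2.2 I' h'.1 h'.2.1 h'.2.2.1) (h'.2.2.2 I h.1 h.2.1 h.2.2.1)

theorem isMinEx_symm {t : ℕ} {a : Fin n → ℕ} {A : Fin n → Finset ℕ}
    {I : Finset (Fin n)} {i j : Fin n} (h : IsMinEx t a A I i j) : IsMinEx t a A I j i :=
  ⟨h.1, h.2.2.1, h.2.1, fun D hD h1 h2 => h.2.2.2 D hD h2 h1⟩

theorem mem_Ix {A : Fin n → Finset ℕ} {x : ℕ} {i : Fin n} : i ∈ Ix A x ↔ x ∈ A i := by
  simp [Ix]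

theorem minWit_isMinEx {t : ℕ} {a : Fin n → ℕ} {A : Fin n → Finset ℕ}
    (hF : IsValuedTN t a A) {x y : ℕ} (hs : Saturated t a A x y) {i j : Fin n}
    (hi : i ∈ minWit t a A x y) (hix : x ∈ A i)
    (hj : j ∈ minWit t a A x y) (hjy : y ∈ A j) :
    i ≠ j ∧ IsMinEx t a A (minWit t a A x y) i j := by
  obtain ⟨hw, hmin⟩ := minWit_spec hs
  set I := minWit t a A x y with hIdef
  have hiy : y ∉ A i := by
    intro hyi
    have : i ∈ I ∩ Ix A x ∩ Ix A y := by
      simp [mem_inter, mem_Ix, hi, hix, hyi]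
    rw [hw.1] at this
    exact absurd this (notMem_empty i)
  have hjx : x ∉ A j := by
    intro hxj
    have : j ∈ I ∩ Ix A x ∩ Ix A y := by
      simp [mem_inter, mem_Ix, hj, hxj, hjy]
    rw [hw.1] at this
    exact absurd this (notMem_empty j)
  refine ⟨fun hij => hjx (hij ▸ hix), wit_exact hw, hi, hj, ?_⟩
  intro D hD hiD hjD
  have hiDI : i ∈ D ∩ I := mem_inter.mpr ⟨hiD, hi⟩
  have hwDI : Wit t a A x y (D ∩ I) := by
    refine ⟨?_, ⟨i, ?_⟩, ⟨j, ?_⟩, ?_⟩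
    · have hsub : (D ∩ I) ∩ Ix A x ∩ Ix A y ⊆ I ∩ Ix A x ∩ Ix A y := by
        intro k hk
        simp only [mem_inter] at *
        exact ⟨⟨hk.1.1.2, hk.1.2⟩, hk.2⟩
      rw [hw.1] at hsub
      exact subset_empty.mp hsub
    · simp [mem_inter, mem_sdiff, mem_Ix, hiD, hi, hix, hiy]
    · simp [mem_inter, mem_sdiff, mem_Ix, hjD, hj, hjy, hjx]
    · exact (exact_inter t a A hF hD (wit_exact hw) ⟨i, hiDI⟩).2
  have hcard : I.card ≤ (D ∩ I).card := hmin _ hwDI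
  have heq : D ∩ I = I := Finset.eq_of_subset_of_card_le inter_subset_right hcard
  rw [← heq]
  exact inter_subset_left

theorem fiber_bound (t : ℕ) (a : Fin n → ℕ) (A : Fin n → Finset ℕ) (hF : IsValuedTN t a A)
    {I : Finset (Fin n)} (hI : ExactS t a A I) (F : Finset (ℕ × ℕ))
    (hlt : ∀ p ∈ F, p.1 < p.2)
    (hwx : ∀ p ∈ F, p.1 ∈ I.biUnion A)
    (hwy : ∀ p ∈ F, p.2 ∈ I.biUnion A)
    (hcross : ∀ p ∈ F, ∀ i ∈ I, p.1 ∈ A i → ∀ j ∈ I, p.2 ∈ A j →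
        i ≠ j ∧ IsMinEx t a A I i j) :
    F.card ≤ ∑ q ∈ (I ×ˢ I).filter (fun q => q.1 < q.2 ∧ IsMinEx t a A I q.1 q.2),
        a q.1 * a q.2 := by
  set H : Finset (Fin n × Fin n) :=
    (I ×ˢ I).filter (fun q => q.1 ≠ q.2 ∧ IsMinEx t a A I q.1 q.2) with hHdef
  have hHmem : ∀ {i j : Fin n},
      (i, j) ∈ H ↔ i ∈ I ∧ j ∈ I ∧ i ≠ j ∧ IsMinEx t a A I i j := by
    intro i j
    simp only [hHdef, mem_filter, mem_product]
    tauto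
  have hHsymm : ∀ {i j : Fin n}, (i, j) ∈ H → (j, i) ∈ H := by
    intro i j h
    rw [hHmem] at h ⊢
    exact ⟨h.2.1, h.1, h.2.2.1.symm, isMinEx_symm h.2.2.2⟩
  have hHirr : ∀ {i : Fin n}, (i, i) ∉ H := by
    intro i h
    exact (hHmem.mp h).2.2.1 rfl
  have hHswap : ∀ q ∈ H, Prod.swap q ∈ H := by
    intro q hq
    exact hHsymm (i := q.1) (j := q.2) hq
  have hHne : ∀ q ∈ H, q.1 ≠ q.2 := by
    intro q hq
    exact (hHmem.mp (show (q.1, q.2) ∈ H from hq)).2.2.1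
  -- step A: 2 * F.card ≤ ∑ over H
  have hdisj : Disjoint F (F.image Prod.swap) := by
    rw [Finset.disjoint_left]
    intro q hq hq'
    obtain ⟨p, hp, rfl⟩ := mem_image.mp hq'
    have h1 := hlt _ hq
    have h2 := hlt _ hp
    simp only [Prod.fst_swap, Prod.snd_swap] at h1
    omega
  have hF2card : (F ∪ F.image Prod.swap).card = 2 * F.card := by
    rw [card_union_of_disjoint hdisj, card_image_of_injective _ Prod.swap_injective]
    omega
  set Q : ℕ × ℕ → Prop :=
    fun q => ∀ i ∈ I, q.1 ∈ A i → ∀ j ∈ I, q.2 ∈ A j → (i, j) ∈ H with hQdef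
  set G : Finset (ℕ × ℕ) := ((I.biUnion A) ×ˢ (I.biUnion A)).filter Q with hGdef
  have hF2G : F ∪ F.image Prod.swap ⊆ G := by
    intro q hq
    rcases mem_union.mp hq with hq | hq
    · rw [hGdef, mem_filter, mem_product]
      exact ⟨⟨hwx _ hq, hwy _ hq⟩,
        fun i hi h1 j hj h2 => hHmem.mpr
          ⟨hi, hj, (hcross _ hq i hi h1 j hj h2).1, (hcross _ hq i hi h1 j hj h2).2⟩⟩
    · obtain ⟨p, hp, rfl⟩ := mem_image.mp hq
      rw [hGdef, mem_filter, mem_product]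
      refine ⟨⟨hwy _ hp, hwx _ hp⟩, ?_⟩
      intro i hi h1 j hj h2
      simp only [Prod.fst_swap, Prod.snd_swap] at h1 h2
      exact hHsymm (hHmem.mpr
        ⟨hj, hi, (hcross _ hp j hj h2 i hi h1).1, (hcross _ hp j hj h2 i hi h1).2⟩)
  have hGsnd : ∀ q ∈ G, q.2 ∈ I.biUnion A := by
    intro q hq
    exact (mem_product.mp (mem_filter.mp hq).1).2
  have hGcard : G.card = ∑ y ∈ I.biUnion A, (G.filter (fun q => q.2 = y)).card :=
    card_eq_sum_card_fiberwise hGsnd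
  -- bound each snd-fiber
  have hfib : ∀ y ∈ I.biUnion A,
      (G.filter (fun q => q.2 = y)).card ≤
        ∑ i ∈ I.filter (fun i => ∀ j ∈ I, y ∈ A j → (i, j) ∈ H), a i := by
    intro y hy
    set Cy := I.filter (fun i => ∀ j ∈ I, y ∈ A j → (i, j) ∈ H) with hCydef
    have hstep : (G.filter (fun q => q.2 = y)).card ≤
        ((I.biUnion A).filter (fun x => ∀ k ∈ I, x ∈ A k → k ∈ Cy)).card := by
      apply Finset.card_le_card_of_injOn Prod.fst
      · intro q hq
        rw [mem_coe, mem_filter] at hq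
        obtain ⟨hqG, hq2⟩ := hq
        rw [hGdef, mem_filter] at hqG
        rw [mem_coe, mem_filter]
        refine ⟨(mem_product.mp hqG.1).1, ?_⟩
        intro k hk hxk
        rw [hCydef, mem_filter]
        exact ⟨hk, fun j hj hyj => hqG.2 k hk hxk j hj (by rw [hq2]; exact hyj)⟩
      · intro q hq q' hq' hfst
        have h2 : q.2 = y := (mem_filter.mp hq).2
        have h2' : q'.2 = y := (mem_filter.mp hq').2
        exact Prod.ext hfst (by rw [h2, h2'])
    refine hstep.trans ?_
    apply countTrace t a A hF hI Cy (filter_subset _ _)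
    obtain ⟨j0, hj0, hyj0⟩ := mem_biUnion.mp hy
    refine ⟨j0, mem_sdiff.mpr ⟨hj0, ?_⟩⟩
    rw [hCydef, mem_filter]
    rintro ⟨-, h⟩
    exact hHirr (h j0 hj0 hyj0)
  have hGbound : G.card ≤ ∑ y ∈ I.biUnion A,
      ∑ i ∈ I.filter (fun i => ∀ j ∈ I, y ∈ A j → (i, j) ∈ H), a i := by
    rw [hGcard]; exact sum_le_sum hfib
  -- exchange the sums
  have hswapsum : ∑ y ∈ I.biUnion A,
      ∑ i ∈ I.filter (fun i => ∀ j ∈ I, y ∈ A j → (i, j) ∈ H), a i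
      = ∑ i ∈ I, ((I.biUnion A).filter
          (fun y => ∀ k ∈ I, y ∈ A k → k ∈ I.filter (fun j => (i, j) ∈ H))).card * a i := by
    calc ∑ y ∈ I.biUnion A, ∑ i ∈ I.filter (fun i => ∀ j ∈ I, y ∈ A j → (i, j) ∈ H), a i
        = ∑ y ∈ I.biUnion A, ∑ i ∈ I,
            if (∀ j ∈ I, y ∈ A j → (i, j) ∈ H) then a i else 0 := by
          refine sum_congr rfl fun y _ => ?_
          rw [sum_filter]
      _ = ∑ i ∈ I, ∑ y ∈ I.biUnion A,
            if (∀ j ∈ I, y ∈ A j → (i, j) ∈ H) then a i else 0 := sum_comm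
      _ = ∑ i ∈ I, ((I.biUnion A).filter
            (fun y => ∀ k ∈ I, y ∈ A k → k ∈ I.filter (fun j => (i, j) ∈ H))).card * a i := by
          refine sum_congr rfl fun i _ => ?_
          rw [← sum_filter]
          have : (I.biUnion A).filter (fun y => ∀ j ∈ I, y ∈ A j → (i, j) ∈ H)
              = (I.biUnion A).filter
                (fun y => ∀ k ∈ I, y ∈ A k → k ∈ I.filter (fun j => (i, j) ∈ H)) := by
            apply filter_congr
            intro y hy
            constructor
            · intro h k hk hyk
              exact mem_filter.mpr ⟨hk, h k hk hyk⟩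
            · intro h j hj hyj
              exact (mem_filter.mp (h j hj hyj)).2
          rw [this, sum_const, smul_eq_mul]
  have hcnt : ∀ i ∈ I, ((I.biUnion A).filter
      (fun y => ∀ k ∈ I, y ∈ A k → k ∈ I.filter (fun j => (i, j) ∈ H))).card
      ≤ ∑ j ∈ I.filter (fun j => (i, j) ∈ H), a j := by
    intro i hi
    apply countTrace t a A hF hI _ (filter_subset _ _)
    exact ⟨i, mem_sdiff.mpr ⟨hi, fun h => hHirr (mem_filter.mp h).2⟩⟩
  have hGbound2 : G.card ≤ ∑ i ∈ I, a i * ∑ j ∈ I.filter (fun j => (i, j) ∈ H), a j := by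
    refine (hGbound.trans (le_of_eq hswapsum)).trans ?_
    refine sum_le_sum fun i hi => ?_
    rw [mul_comm]
    exact Nat.mul_le_mul_left _ (hcnt i hi)
  -- identify with the sum over H
  have hHsum : ∑ q ∈ H, a q.1 * a q.2
      = ∑ i ∈ I, a i * ∑ j ∈ I.filter (fun j => (i, j) ∈ H), a j := by
    rw [hHdef, sum_filter, sum_product]
    refine sum_congr rfl fun i hi => ?_
    rw [mul_sum, sum_filter]
    refine sum_congr rfl fun j hj => ?_
    by_cases h : (i, j) ∈ H
    · rw [if_pos h, if_pos]
      exact (hHmem.mp h).2.2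
    · rw [if_neg h, if_neg]
      intro hc
      exact h (hHmem.mpr ⟨hi, hj, hc.1, hc.2⟩)
  -- step B : halving
  have hhalf : ∑ q ∈ H, a q.1 * a q.2
      = 2 * ∑ q ∈ H.filter (fun q => q.1 < q.2), a q.1 * a q.2 := by
    rw [← sum_filter_add_sum_filter_not H (fun q => q.1 < q.2)]
    have : ∑ q ∈ H.filter (fun q => ¬ q.1 < q.2), a q.1 * a q.2
        = ∑ q ∈ H.filter (fun q => q.1 < q.2), a q.1 * a q.2 := by
      apply Finset.sum_nbij' (i := Prod.swap) (j := Prod.swap)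
      · intro q hq
        rw [mem_filter] at hq ⊢
        have hne := hHne q hq.1
        refine ⟨hHswap q hq.1, ?_⟩
        simp only [Prod.fst_swap, Prod.snd_swap]
        rcases lt_or_gt_of_ne hne with h | h
        · exact absurd h hq.2
        · exact h
      · intro q hq
        rw [mem_filter] at hq ⊢
        refine ⟨hHswap q hq.1, ?_⟩
        simp only [Prod.fst_swap, Prod.snd_swap]
        omega
      · intro q _; exact Prod.swap_swap q
      · intro q _; exact Prod.swap_swap q
      · intro q _; simp only [Prod.fst_swap, Prod.snd_swap]; exact Nat.mul_comm _ _
    rw [this]; omega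
  have htarget : (I ×ˢ I).filter (fun q => q.1 < q.2 ∧ IsMinEx t a A I q.1 q.2)
      = H.filter (fun q => q.1 < q.2) := by
    rw [hHdef, filter_filter]
    apply filter_congr
    intro q _
    constructor
    · rintro ⟨h1, h2⟩; exact ⟨⟨ne_of_lt h1, h2⟩, h1⟩
    · rintro ⟨⟨h1, h2⟩, h3⟩; exact ⟨h3, h2⟩
  have hchain : 2 * F.card ≤ 2 * ∑ q ∈ H.filter (fun q => q.1 < q.2), a q.1 * a q.2 := by
    calc 2 * F.card = (F ∪ F.image Prod.swap).card := hF2card.symm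
      _ ≤ G.card := card_le_card hF2G
      _ ≤ ∑ i ∈ I, a i * ∑ j ∈ I.filter (fun j => (i, j) ∈ H), a j := hGbound2
      _ = ∑ q ∈ H, a q.1 * a q.2 := hHsum.symm
      _ = 2 * ∑ q ∈ H.filter (fun q => q.1 < q.2), a q.1 * a q.2 := hhalf
  rw [htarget]
  omega

end SatBound

open SatBound in
open scoped Classical in
theorem saturated_pairs_upper (t n : ℕ) (a : Fin n → ℕ) (A : Fin n → Finset ℕ)
    (hF : IsValuedTN t a A) :
    (((Finset.univ.biUnion A) ×ˢ (Finset.univ.biUnion A)).filter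
        (fun p => p.1 < p.2 ∧ Exclusive A p.1 p.2 ∧ Saturated t a A p.1 p.2)).card ≤
      pairSum a := by
  set P := (((Finset.univ.biUnion A) ×ˢ (Finset.univ.biUnion A)).filter
      (fun p => p.1 < p.2 ∧ Exclusive A p.1 p.2 ∧ Saturated t a A p.1 p.2)) with hPdef
  have hPmem : ∀ p ∈ P, p.1 < p.2 ∧ Saturated t a A p.1 p.2 := by
    intro p hp
    have := (mem_filter.mp hp).2
    exact ⟨this.1, this.2.2⟩
  set Φ : ℕ × ℕ → Finset (Fin n) := fun p => minWit t a A p.1 p.2 with hΦdef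
  have hcard : P.card = ∑ I ∈ P.image Φ, (P.filter fun p => Φ p = I).card :=
    card_eq_sum_card_fiberwise (fun p hp => mem_image_of_mem Φ hp)
  -- witness facts for fiber members
  have hwitF : ∀ I, ∀ p ∈ P.filter (fun p => Φ p = I), Wit t a A p.1 p.2 I := by
    intro I p hp
    have h1 := (mem_filter.mp hp).2
    have h2 := (minWit_spec (hPmem p (mem_filter.mp hp).1).2).1
    rwa [show minWit t a A p.1 p.2 = I from h1] at h2
  have hfibbound : ∀ I ∈ P.image Φ,
      (P.filter fun p => Φ p = I).card ≤
        ∑ q ∈ (I ×ˢ I).filter (fun q => q.1 < q.2 ∧ IsMinEx t a A I q.1 q.2),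
          a q.1 * a q.2 := by
    intro I hI
    obtain ⟨p0, hp0, hp0I⟩ := mem_image.mp hI
    have hIexact : ExactS t a A I := wit_exact (hwitF I p0 (mem_filter.mpr ⟨hp0, hp0I⟩))
    apply fiber_bound t a A hF hIexact
    · intro p hp
      exact (hPmem p (mem_filter.mp hp).1).1
    · intro p hp
      obtain ⟨i, hi⟩ := (hwitF I p hp).2.1
      rw [mem_inter, mem_sdiff, mem_Ix] at hi
      exact mem_biUnion.mpr ⟨i, hi.1, hi.2.1⟩
    · intro p hp
      obtain ⟨j, hj⟩ := (hwitF I p hp).2.2.1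
      rw [mem_inter, mem_sdiff, mem_Ix] at hj
      exact mem_biUnion.mpr ⟨j, hj.1, hj.2.1⟩
    · intro p hp i hi h1 j hj h2
      have hsat := (hPmem p (mem_filter.mp hp).1).2
      have hΦI : minWit t a A p.1 p.2 = I := (mem_filter.mp hp).2
      have := minWit_isMinEx hF hsat (i := i) (j := j)
        (by rw [hΦI]; exact hi) h1 (by rw [hΦI]; exact hj) h2
      rwa [hΦI] at this
  have hdisjcl : ((P.image Φ : Finset (Finset (Fin n))) : Set (Finset (Fin n))).PairwiseDisjoint
      (fun I => (I ×ˢ I).filter (fun q => q.1 < q.2 ∧ IsMinEx t a A I q.1 q.2)) := by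
    intro I _ I' _ hne
    simp only [Function.onFun]
    rw [Finset.disjoint_left]
    intro q hq hq'
    have h1 := (mem_filter.mp hq).2.2
    have h2 := (mem_filter.mp hq').2.2
    exact hne (isMinEx_unique h1 h2)
  have hsum2 : ∑ I ∈ P.image Φ,
      ∑ q ∈ (I ×ˢ I).filter (fun q => q.1 < q.2 ∧ IsMinEx t a A I q.1 q.2), a q.1 * a q.2
      ≤ pairSum a := by
    rw [← Finset.sum_biUnion hdisjcl]
    apply Finset.sum_le_sum_of_subset
    intro q hq
    obtain ⟨I, _, hqI⟩ := mem_biUnion.mp hq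
    exact mem_filter.mpr ⟨mem_univ q, (mem_filter.mp hqI).2.1⟩
  calc P.card = ∑ I ∈ P.image Φ, (P.filter fun p => Φ p = I).card := hcard
    _ ≤ ∑ I ∈ P.image Φ,
        ∑ q ∈ (I ×ˢ I).filter (fun q => q.1 < q.2 ∧ IsMinEx t a A I q.1 q.2),
          a q.1 * a q.2 := sum_le_sum hfibbound
    _ ≤ pairSum a := hsum2
end

section
/- Let F be a valued (t,n)-family with valuation (a_1,...,a_n) such that |⋃_{i=1}^n A_i| = ∑_{i=1}^n a_i + t and for every proper subset J ⊊ {1,...,n} with |J| ≥ 2 one has |⋃_{i∈J} A_i| > ∑_{i∈J} a_i + t. Then an exclusive pair {x,y} is saturated for F if and only if I_x ∩ I_y = ∅. -/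
open Finset

theorem saturated_iff_disjoint (t n : ℕ) (a : Fin n → ℕ) (A : Fin n → Finset ℕ)
    (hF : IsValuedTN t a A)
    (htotal : ((Finset.univ : Finset (Fin n)).biUnion A).card = (∑ i, a i) + t)
    (hproper : ∀ J : Finset (Fin n), J ⊂ Finset.univ → 2 ≤ J.card →
      (∑ i ∈ J, a i) + t < (J.biUnion A).card)
    (x y : ℕ) (hxy : Exclusive A x y) :
    Saturated t a A x y ↔ Ix A x ∩ Ix A y = ∅ := by
  constructor
  · rintro ⟨I, hI0, ⟨i, hi⟩, ⟨j, hj⟩, hcard⟩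
    have hi' := hi; have hj' := hj
    simp [Ix, Finset.mem_inter, Finset.mem_sdiff, Finset.mem_filter] at hi' hj'
    have hij : i ≠ j := by
      intro h; subst h; exact hj'.2.2 hi'.2.1
    have h2 : 2 ≤ I.card := by
      have := Finset.one_lt_card.mpr ⟨i, hi'.1, j, hj'.1, hij⟩
      omega
    have hIuniv : I = Finset.univ := by
      by_contra h
      have hssub : I ⊂ Finset.univ :=
        ⟨Finset.subset_univ I, fun hu => h (Finset.univ_subset_iff.mp hu)⟩
      have := hproper I hssub h2
      omega
    subst hIuniv
    rwa [Finset.univ_inter] at hI0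
  · intro hdisj
    refine ⟨Finset.univ, by rwa [Finset.univ_inter], ?_, ?_, htotal⟩
    · simpa using hxy.1
    · simpa using hxy.2
end

section
/- Let F be a valued (t,n)-family with valuation (a_1,...,a_n) such that |⋃_{i=1}^n A_i| = ∑_{i=1}^n a_i + t. Then the number of unordered pairs {x,y} of elements of ⋃ A_i with I_x ∩ I_y = ∅ is at most ∑_{1 ≤ i < j ≤ n} a_i·a_j. -/
open Finset

lemma two_mul_pairSum {n : ℕ} (a : Fin n → ℕ) :
    2 * pairSum a + ∑ i, a i * a i = (∑ i, a i) * (∑ i, a i) := by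
  classical
  have hprod : (∑ i, a i) * (∑ i, a i)
      = ∑ p ∈ (Finset.univ : Finset (Fin n × Fin n)), a p.1 * a p.2 := by
    rw [Finset.sum_mul_sum]
    rw [← Finset.univ_product_univ, Finset.sum_product]
  rw [hprod, ← Finset.sum_filter_add_sum_filter_not (Finset.univ : Finset (Fin n × Fin n))
    (fun p => p.1 < p.2) (fun p => a p.1 * a p.2)]
  have hne : (Finset.univ.filter (fun p : Fin n × Fin n => ¬ p.1 < p.2))
      = Finset.univ.filter (fun p => p.2 < p.1) ∪ Finset.univ.filter (fun p => p.1 = p.2) := by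
    ext p
    simp only [Finset.mem_filter, Finset.mem_union, Finset.mem_univ, true_and, not_lt]
    constructor
    · intro h
      rcases lt_or_eq_of_le h with h | h
      · exact Or.inl h
      · exact Or.inr h.symm
    · rintro (h | h)
      · exact h.le
      · exact h.ge
  rw [hne, Finset.sum_union]
  · have hswap : ∑ p ∈ Finset.univ.filter (fun p : Fin n × Fin n => p.2 < p.1), a p.1 * a p.2
        = pairSum a := by
      unfold pairSum
      refine Finset.sum_nbij' Prod.swap Prod.swap ?_ ?_ ?_ ?_ ?_ <;>
        simp [mul_comm]
    have hdiag : ∑ p ∈ Finset.univ.filter (fun p : Fin n × Fin n => p.1 = p.2), a p.1 * a p.2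
        = ∑ i, a i * a i := by
      refine Finset.sum_nbij' Prod.fst (fun i => (i, i)) ?_ ?_ ?_ ?_ ?_
      · simp
      · simp
      · intro p hp
        simp only [Finset.mem_filter] at hp
        obtain ⟨p1, p2⟩ := p
        simp only at hp ⊢
        rw [hp.2]
      · simp
      · intro p hp
        simp only [Finset.mem_filter] at hp
        rw [hp.2]
    rw [hswap, hdiag]
    unfold pairSum
    ring
  · rw [Finset.disjoint_filter]
    intro p _ h h'
    exact absurd h' (ne_of_gt h)

lemma sum_sub_mul_eq {n : ℕ} (a : Fin n → ℕ) :
    ∑ i, ((∑ j, a j) - a i) * a i = 2 * pairSum a := by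
  have h2 : ∑ i, (((∑ j, a j) - a i) * a i + a i * a i) = (∑ i, a i) * (∑ i, a i) := by
    rw [Finset.mul_sum]
    refine Finset.sum_congr rfl fun i _ => ?_
    have hle : a i ≤ ∑ j, a j := Finset.single_le_sum (fun j _ => Nat.zero_le _) (Finset.mem_univ i)
    rw [← Nat.add_mul, Nat.sub_add_cancel hle]
  rw [Finset.sum_add_distrib] at h2
  have := two_mul_pairSum a
  omega


open scoped Classical in
theorem disjoint_pairs_upper (t n : ℕ) (a : Fin n → ℕ) (A : Fin n → Finset ℕ)
    (hF : IsValuedTN t a A)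
    (htotal : ((Finset.univ : Finset (Fin n)).biUnion A).card = (∑ i, a i) + t) :
    (((Finset.univ.biUnion A) ×ˢ (Finset.univ.biUnion A)).filter
        (fun p => p.1 < p.2 ∧ Ix A p.1 ∩ Ix A p.2 = ∅)).card ≤ pairSum a := by
  classical
  obtain ⟨hpos, hcard, hunion⟩ := hF
  set UU := (Finset.univ : Finset (Fin n)).biUnion A with hUUdef
  -- Step 1: per-element bound
  have key : ∀ x ∈ UU, (UU.filter fun y => Ix A x ∩ Ix A y = ∅).card ≤ ∑ i ∈ (Ix A x)ᶜ, a i := by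
    intro x hx
    obtain ⟨i0, -, hi0⟩ := Finset.mem_biUnion.1 hx
    have hIx : (Ix A x).Nonempty := ⟨i0, by simp [Ix, hi0]⟩
    set Sx := (Ix A x).biUnion A with hSxdef
    have hSsub : Sx ⊆ UU := by
      intro z hz
      obtain ⟨i, -, hi⟩ := Finset.mem_biUnion.1 hz
      exact Finset.mem_biUnion.2 ⟨i, Finset.mem_univ i, hi⟩
    have hSlow : (∑ i ∈ Ix A x, a i) + t ≤ Sx.card := by
      rcases Nat.lt_or_ge (Ix A x).card 2 with h2 | h2
      · have h1 : (Ix A x).card = 1 :=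
          le_antisymm (by omega) (Finset.card_pos.2 hIx)
        obtain ⟨i, hi⟩ := Finset.card_eq_one.1 h1
        rw [hSxdef, hi]
        simp [hcard i]
      · exact hunion _ h2
    have hsub : (UU.filter fun y => Ix A x ∩ Ix A y = ∅) ⊆ UU \ Sx := by
      intro y hy
      rw [Finset.mem_filter] at hy
      refine Finset.mem_sdiff.2 ⟨hy.1, fun hyS => ?_⟩
      obtain ⟨i, hiIx, hiy⟩ := Finset.mem_biUnion.1 hyS
      have : i ∈ Ix A x ∩ Ix A y :=
        Finset.mem_inter.2 ⟨hiIx, by simp [Ix, hiy]⟩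
      rw [hy.2] at this
      exact absurd this (Finset.notMem_empty i)
    have hcompl := Finset.sum_add_sum_compl (Ix A x) a
    calc (UU.filter fun y => Ix A x ∩ Ix A y = ∅).card
        ≤ (UU \ Sx).card := Finset.card_le_card hsub
      _ = UU.card - Sx.card := Finset.card_sdiff_of_subset hSsub
      _ ≤ ((∑ i, a i) + t) - ((∑ i ∈ Ix A x, a i) + t) := by
          rw [htotal]; exact Nat.sub_le_sub_left hSlow _
      _ = ∑ i ∈ (Ix A x)ᶜ, a i := by omega
  -- Step 2: ordered pairs = 2 * unordered pairs
  set P := ((UU ×ˢ UU).filter fun p => p.1 < p.2 ∧ Ix A p.1 ∩ Ix A p.2 = ∅) with hPdef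
  set Q := ((UU ×ˢ UU).filter fun p => p.1 ≠ p.2 ∧ Ix A p.1 ∩ Ix A p.2 = ∅) with hQdef
  have hQ2 : Q.card = 2 * P.card := by
    have hsplit : Q = P ∪ ((UU ×ˢ UU).filter fun p => p.2 < p.1 ∧ Ix A p.1 ∩ Ix A p.2 = ∅) := by
      ext p
      simp only [hQdef, hPdef, Finset.mem_union, Finset.mem_filter]
      constructor
      · rintro ⟨hp, hne, hd⟩
        rcases lt_or_gt_of_ne hne with h | h
        · exact Or.inl ⟨hp, h, hd⟩
        · exact Or.inr ⟨hp, h, hd⟩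
      · rintro (⟨hp, h, hd⟩ | ⟨hp, h, hd⟩)
        · exact ⟨hp, ne_of_lt h, hd⟩
        · exact ⟨hp, (ne_of_lt h).symm, hd⟩
    have hcard2 : ((UU ×ˢ UU).filter fun p => p.2 < p.1 ∧ Ix A p.1 ∩ Ix A p.2 = ∅).card
        = P.card := by
      refine Finset.card_nbij' Prod.swap Prod.swap ?_ ?_ (fun p _ => by simp) (fun p _ => by simp)
      all_goals
        intro p hp
        simp only [hPdef, Finset.mem_coe, Finset.mem_filter, Finset.mem_product, Prod.fst_swap,
          Prod.snd_swap] at *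
        exact ⟨⟨hp.1.2, hp.1.1⟩, hp.2.1, by rw [Finset.inter_comm]; exact hp.2.2⟩
    rw [hsplit, Finset.card_union_of_disjoint, hcard2]
    · ring
    · rw [Finset.disjoint_filter]
      rintro p - ⟨h, -⟩ ⟨h', -⟩
      exact absurd h' (by omega)
  -- Step 3: fiberwise count of Q
  have hQsum : Q.card = ∑ x ∈ UU, (UU.filter fun y => x ≠ y ∧ Ix A x ∩ Ix A y = ∅).card := by
    rw [hQdef, Finset.card_filter, Finset.sum_product]
    refine Finset.sum_congr rfl fun x _ => ?_
    rw [Finset.card_filter]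
  -- Step 4: bound each fiber
  have hfib : ∀ x ∈ UU, (UU.filter fun y => x ≠ y ∧ Ix A x ∩ Ix A y = ∅).card
      ≤ ∑ i ∈ (Ix A x)ᶜ, a i := by
    intro x hx
    refine le_trans (Finset.card_le_card ?_) (key x hx)
    intro y hy
    rw [Finset.mem_filter] at hy ⊢
    exact ⟨hy.1, hy.2.2⟩
  have hQle : Q.card ≤ ∑ x ∈ UU, ∑ i ∈ (Ix A x)ᶜ, a i := by
    rw [hQsum]; exact Finset.sum_le_sum hfib
  -- Step 5: double counting
  have hswap : ∑ x ∈ UU, ∑ i ∈ (Ix A x)ᶜ, a i = ∑ i, ((∑ j, a j) - a i) * a i := by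
    have h1 : ∀ x, ∑ i ∈ (Ix A x)ᶜ, a i = ∑ i, if x ∈ A i then 0 else a i := by
      intro x
      rw [show (Ix A x)ᶜ = Finset.univ.filter (fun i => ¬ x ∈ A i) by
        ext i; simp [Ix]]
      rw [Finset.sum_filter]
      refine Finset.sum_congr rfl fun i _ => ?_
      by_cases h : x ∈ A i <;> simp [h]
    calc ∑ x ∈ UU, ∑ i ∈ (Ix A x)ᶜ, a i
        = ∑ x ∈ UU, ∑ i, if x ∈ A i then 0 else a i := by
          exact Finset.sum_congr rfl fun x _ => h1 x
      _ = ∑ i, ∑ x ∈ UU, if x ∈ A i then 0 else a i := Finset.sum_comm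
      _ = ∑ i, ((∑ j, a j) - a i) * a i := by
          refine Finset.sum_congr rfl fun i _ => ?_
          have hAsub : A i ⊆ UU := fun z hz =>
            Finset.mem_biUnion.2 ⟨i, Finset.mem_univ i, hz⟩
          have : ∑ x ∈ UU, (if x ∈ A i then 0 else a i)
              = ∑ x ∈ UU.filter (fun x => ¬ x ∈ A i), a i := by
            rw [Finset.sum_filter]
            refine Finset.sum_congr rfl fun x _ => ?_
            by_cases h : x ∈ A i <;> simp [h]
          rw [this, Finset.sum_const, smul_eq_mul]
          have : UU.filter (fun x => ¬ x ∈ A i) = UU \ A i := by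
            ext z; simp [Finset.mem_sdiff]
          rw [this, Finset.card_sdiff_of_subset hAsub, htotal, hcard i]
          congr 1
          omega
  have hfin : 2 * P.card ≤ 2 * pairSum a := by
    calc 2 * P.card = Q.card := hQ2.symm
      _ ≤ ∑ x ∈ UU, ∑ i ∈ (Ix A x)ᶜ, a i := hQle
      _ = ∑ i, ((∑ j, a j) - a i) * a i := hswap
      _ = 2 * pairSum a := sum_sub_mul_eq a
  omega
end
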